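/- arXiv:2409.13493 — 8 statements merged into one kernel-verified Lean document; each statement's English description precedes it below -/
import Mathlib

section
/- Let Ω be a nonempty compact metric space, f : Ω → Ω a homeomorphism, φ : Ω → ℝ^d a continuous map, and g : ℝ^d × ℝ^L → ℝ^L a continuous map for which there exists λ ∈ (0,1) with ‖g(u,y) − g(u,y')‖ ≤ λ‖y − y'‖ for all u ∈ ℝ^d and y, y' ∈ ℝ^L. Then there exists a unique continuous map Φ : Ω → ℝ^L satisfying Φ(f(ω)) = g(φ(ω), Φ(ω)) for every ω ∈ Ω. -/
open Filter Topology

/-- **Existence and uniqueness of the invariant graph (echo-state network) map.**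
If `g` is a uniform `λ`-contraction (`λ < 1`) in its second variable, the driven system
`y_{n+1} = g(φ(ω_n), y_n)` over the base homeomorphism `f` admits a unique continuous
map `Φ : Ω → ℝ^L` with `Φ ∘ f = g ∘ (φ, Φ)`. -/
theorem invariant_graph_exists_unique
    {Ω : Type*} [MetricSpace Ω] [CompactSpace Ω] [Nonempty Ω]
    {d L : ℕ} (f : Ω ≃ₜ Ω)
    (φ : Ω → EuclideanSpace ℝ (Fin d)) (hφ : Continuous φ)
    (g : EuclideanSpace ℝ (Fin d) × EuclideanSpace ℝ (Fin L) → EuclideanSpace ℝ (Fin L))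
    (hg : Continuous g)
    (lam : ℝ) (hlam : lam ∈ Set.Ioo (0 : ℝ) 1)
    (hcontr : ∀ (u : EuclideanSpace ℝ (Fin d)) (y y' : EuclideanSpace ℝ (Fin L)),
      ‖g (u, y) - g (u, y')‖ ≤ lam * ‖y - y'‖) :
    ∃! Φ : Ω → EuclideanSpace ℝ (Fin L),
      Continuous Φ ∧ ∀ ω : Ω, Φ (f ω) = g (φ ω, Φ ω) := by
  obtain ⟨hl0, hl1⟩ := hlam
  let E := EuclideanSpace ℝ (Fin L)
  let T : C(Ω, E) → C(Ω, E) := fun Φ =>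
    ⟨fun ω => g (φ (f.symm ω), Φ (f.symm ω)),
      hg.comp (((hφ.comp f.symm.continuous).prodMk
        (Φ.continuous.comp f.symm.continuous)) : Continuous fun ω => (φ (f.symm ω), Φ (f.symm ω)))⟩
  have hT : ContractingWith ⟨lam, hl0.le⟩ T := by
    refine ⟨by exact_mod_cast hl1, LipschitzWith.of_dist_le_mul fun Φ Ψ => ?_⟩
    refine (ContinuousMap.dist_le (by positivity)).2 fun ω => ?_
    simp only [T, ContinuousMap.coe_mk]
    calc dist (g (φ (f.symm ω), Φ (f.symm ω))) (g (φ (f.symm ω), Ψ (f.symm ω))) ≤ lam * dist (Φ (f.symm ω)) (Ψ (f.symm ω)) := by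
          have h := hcontr (φ (f.symm ω)) (Φ (f.symm ω)) (Ψ (f.symm ω))
          rw [← dist_eq_norm, ← dist_eq_norm] at h
          exact h
      _ ≤ lam * dist Φ Ψ :=
          mul_le_mul_of_nonneg_left (ContinuousMap.dist_apply_le_dist _) hl0.le
  have key : ∀ Φ : C(Ω, E), T Φ = Φ ↔ ∀ ω, Φ (f ω) = g (φ ω, Φ ω) := by
    intro Φ
    constructor
    · intro h ω
      have := congrFun (congrArg DFunLike.coe h) (f ω)
      simpa [T] using this.symm
    · intro h
      refine ContinuousMap.ext fun ω => ?_
      simpa [T] using (h (f.symm ω)).symm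
  refine ⟨⇑(hT.fixedPoint T), ⟨(hT.fixedPoint T).continuous, (key _).1 hT.fixedPoint_isFixedPt⟩, ?_⟩
  rintro Ψ ⟨hΨc, hΨ⟩
  have : (⟨Ψ, hΨc⟩ : C(Ω, E)) = hT.fixedPoint T :=
    hT.fixedPoint_unique ((key _).2 hΨ)
  exact congrArg DFunLike.coe this
end

section
/- Let Ω be a compact metric space, f : Ω → Ω a continuous map, and μ an f-invariant Borel probability measure on Ω. For a continuous map A : Ω → GL(d, ℝ) define λ₁(A) := inf_{n ≥ 1} (1/n) ∫_Ω log ‖A(f^{n−1}ω) ⋯ A(f(ω)) A(ω)‖ dμ(ω), where ‖·‖ is the operator norm. Then λ₁ is upper semicontinuous with respect to uniform convergence: for every continuous A : Ω → GL(d, ℝ) and every ε > 0 there is δ > 0 such that every continuous B : Ω → GL(d, ℝ) with sup_{ω ∈ Ω} ‖B(ω) − A(ω)‖ < δ satisfies λ₁(B) < λ₁(A) + ε. -/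
open Filter Topology MeasureTheory

/-- The matrix cocycle over `f` generated by `A` (matrices realized as continuous linear
endomorphisms of `ℝ^d`): `cocycle f A n ω = A (f^{n-1} ω) ⋯ A (f ω) A ω`. -/
noncomputable def cocycle {Ω : Type*} {E : Type*} [NormedAddCommGroup E] [NormedSpace ℝ E]
    (f : Ω → Ω) (A : Ω → E →L[ℝ] E) : ℕ → Ω → (E →L[ℝ] E)
  | 0, _ => 1
  | (n + 1), ω => cocycle f A n (f ω) * A ω

/-- The top Lyapunov exponent of the cocycle generated by `A` over `(Ω, f, μ)`, defined via
subadditivity as `inf_{n ≥ 1} (1/n) ∫ log ‖A(f^{n-1} ω) ⋯ A(ω)‖ dμ(ω)`. -/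
noncomputable def lyap1 {Ω : Type*} [MeasurableSpace Ω] (μ : Measure Ω) (f : Ω → Ω)
    {E : Type*} [NormedAddCommGroup E] [NormedSpace ℝ E]
    (A : Ω → E →L[ℝ] E) : ℝ :=
  ⨅ n : {k : ℕ // 0 < k}, ((n : ℕ) : ℝ)⁻¹ * ∫ ω, Real.log ‖cocycle f A (n : ℕ) ω‖ ∂μ

section Aux

variable {Ω : Type*} {E : Type*} [NormedAddCommGroup E] [NormedSpace ℝ E]
  {f : Ω → Ω} {A B : Ω → E →L[ℝ] E}

lemma cocycle_succ (n : ℕ) (ω : Ω) :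
    cocycle f A (n + 1) ω = cocycle f A n (f ω) * A ω := rfl

lemma cocycle_continuous [TopologicalSpace Ω] (hf : Continuous f) (hA : Continuous A) (n : ℕ) :
    Continuous (cocycle f A n) := by
  induction n with
  | zero => exact continuous_const
  | succ n ih =>
    show Continuous fun ω => cocycle f A n (f ω) * A ω
    exact (ih.comp hf).mul hA

lemma cocycle_norm_le {M : ℝ} (hM : 1 ≤ M) (h : ∀ ω, ‖A ω‖ ≤ M) (n : ℕ) (ω : Ω) :
    ‖cocycle f A n ω‖ ≤ M ^ n := by
  induction n generalizing ω with
  | zero => simp only [cocycle, pow_zero]; exact ContinuousLinearMap.norm_id_le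
  | succ n ih =>
    rw [cocycle_succ]
    calc ‖cocycle f A n (f ω) * A ω‖ ≤ ‖cocycle f A n (f ω)‖ * ‖A ω‖ := norm_mul_le _ _
    _ ≤ M ^ n * M := by
        apply mul_le_mul (ih (f ω)) (h ω) (norm_nonneg _) (by positivity)
    _ = M ^ (n + 1) := by ring

lemma cocycle_isUnit (h : ∀ ω, IsUnit (A ω)) (n : ℕ) (ω : Ω) : IsUnit (cocycle f A n ω) := by
  induction n generalizing ω with
  | zero => exact isUnit_one
  | succ n ih => rw [cocycle_succ]; exact (ih (f ω)).mul (h ω)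

lemma cocycle_sub_norm_le {M δ : ℝ} (hM : 1 ≤ M)
    (hA : ∀ ω, ‖A ω‖ ≤ M) (hB : ∀ ω, ‖B ω‖ ≤ M) (hδ : 0 ≤ δ)
    (hAB : ∀ ω, ‖B ω - A ω‖ ≤ δ) (n : ℕ) (ω : Ω) :
    ‖cocycle f B n ω - cocycle f A n ω‖ ≤ n * M ^ n * δ := by
  induction n generalizing ω with
  | zero => simp [cocycle]
  | succ n ih =>
    have key : cocycle f B (n + 1) ω - cocycle f A (n + 1) ω
        = cocycle f B n (f ω) * (B ω - A ω)
          + (cocycle f B n (f ω) - cocycle f A n (f ω)) * A ω := by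
      rw [cocycle_succ, cocycle_succ]; noncomm_ring
    have h1 : ‖cocycle f B n (f ω)‖ ≤ M ^ n := cocycle_norm_le hM hB n (f ω)
    have h2 := ih (f ω)
    have h3 : M ^ n ≤ M ^ (n + 1) := pow_le_pow_right₀ (by linarith) (Nat.le_succ n)
    have hMn : (0:ℝ) ≤ M ^ n := by positivity
    calc ‖cocycle f B (n + 1) ω - cocycle f A (n + 1) ω‖
        ≤ ‖cocycle f B n (f ω) * (B ω - A ω)‖
          + ‖(cocycle f B n (f ω) - cocycle f A n (f ω)) * A ω‖ := by
          rw [key]; exact norm_add_le _ _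
      _ ≤ ‖cocycle f B n (f ω)‖ * ‖B ω - A ω‖
          + ‖cocycle f B n (f ω) - cocycle f A n (f ω)‖ * ‖A ω‖ := by
          exact add_le_add (norm_mul_le _ _) (norm_mul_le _ _)
      _ ≤ M ^ n * δ + (n * M ^ n * δ) * M := by
          apply add_le_add
          · exact mul_le_mul h1 (hAB ω) (norm_nonneg _) hMn
          · exact mul_le_mul h2 (hA ω) (norm_nonneg _) (by positivity)
      _ ≤ (↑(n + 1)) * M ^ (n + 1) * δ := by
          push_cast
          rw [pow_succ]
          nlinarith [mul_nonneg (mul_nonneg hMn hδ) (sub_nonneg.mpr hM)]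

lemma one_le_pow_mul_norm_cocycle [Nontrivial E] {K : ℝ}
    (h : ∀ ω, IsUnit (A ω)) (hK : ∀ ω, ‖Ring.inverse (A ω)‖ ≤ K) (n : ℕ) (ω : Ω) :
    1 ≤ K ^ n * ‖cocycle f A n ω‖ := by
  have hK0 : 0 ≤ K := le_trans (norm_nonneg _) (hK ω)
  induction n generalizing ω with
  | zero =>
    simp [cocycle, ContinuousLinearMap.one_def, ContinuousLinearMap.norm_id]
  | succ n ih =>
    have hcan : cocycle f A (n + 1) ω * Ring.inverse (A ω) = cocycle f A n (f ω) := by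
      rw [cocycle_succ, mul_assoc, Ring.mul_inverse_cancel _ (h ω), mul_one]
    have hle : ‖cocycle f A n (f ω)‖ ≤ ‖cocycle f A (n + 1) ω‖ * K := by
      rw [← hcan]
      exact (norm_mul_le _ _).trans
        (mul_le_mul_of_nonneg_left (hK ω) (norm_nonneg _))
    have := ih (f ω)
    have hKn : (0:ℝ) ≤ K ^ n := by positivity
    calc (1:ℝ) ≤ K ^ n * ‖cocycle f A n (f ω)‖ := this
      _ ≤ K ^ n * (‖cocycle f A (n + 1) ω‖ * K) := by
          exact mul_le_mul_of_nonneg_left hle hKn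
      _ = K ^ (n + 1) * ‖cocycle f A (n + 1) ω‖ := by ring

lemma clm_nontrivial [Nontrivial E] : Nontrivial (E →L[ℝ] E) := by
  refine ⟨1, 0, fun h => ?_⟩
  have h1 : ‖(1 : E →L[ℝ] E)‖ = 1 := by
    rw [ContinuousLinearMap.one_def]; exact ContinuousLinearMap.norm_id
  rw [h, norm_zero] at h1
  exact one_ne_zero h1.symm

lemma continuous_log_norm_cocycle [TopologicalSpace Ω] [Nontrivial E]
    (hf : Continuous f) (hB : Continuous B) (hBu : ∀ ω, IsUnit (B ω)) (n : ℕ) :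
    Continuous fun ω => Real.log ‖cocycle f B n ω‖ := by
  haveI := clm_nontrivial (E := E)
  rw [continuous_iff_continuousAt]
  intro ω
  have hne : cocycle f B n ω ≠ 0 := (cocycle_isUnit hBu n ω).ne_zero
  have h1 : ContinuousAt Real.log ‖cocycle f B n ω‖ :=
    Real.continuousAt_log (norm_ne_zero_iff.mpr hne)
  have h2 : ContinuousAt (fun ω => ‖cocycle f B n ω‖) ω :=
    ((cocycle_continuous hf hB n).norm).continuousAt
  exact ContinuousAt.comp (x := ω) h1 h2

end Aux

section Aux2

variable {Ω : Type*} [MetricSpace Ω] [CompactSpace Ω] [MeasurableSpace Ω] [BorelSpace Ω]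
  {E : Type*} [NormedAddCommGroup E] [NormedSpace ℝ E] [Nontrivial E]
  {f : Ω → Ω} {B : Ω → E →L[ℝ] E}

lemma integrable_log_norm_cocycle (μ : Measure Ω) [IsFiniteMeasure μ]
    (hf : Continuous f) (hB : Continuous B) (hBu : ∀ ω, IsUnit (B ω)) (n : ℕ) :
    Integrable (fun ω => Real.log ‖cocycle f B n ω‖) μ :=
  (continuous_log_norm_cocycle hf hB hBu n).integrable_of_hasCompactSupport
    (HasCompactSupport.of_compactSpace _)

lemma log_norm_cocycle_lb {K : ℝ} (hBu : ∀ ω, IsUnit (B ω))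
    (hK1 : 1 ≤ K) (hK : ∀ ω, ‖Ring.inverse (B ω)‖ ≤ K) (n : ℕ) (ω : Ω) :
    -((n : ℝ) * Real.log K) ≤ Real.log ‖cocycle f B n ω‖ := by
  have h1 : 1 ≤ K ^ n * ‖cocycle f B n ω‖ := one_le_pow_mul_norm_cocycle hBu hK n ω
  have hKN : (0:ℝ) < K ^ n := by positivity
  have h2 : (K ^ n)⁻¹ ≤ ‖cocycle f B n ω‖ := by
    rw [inv_eq_one_div, div_le_iff₀ hKN]
    nlinarith
  have h3 := Real.log_le_log (by positivity) h2
  rwa [Real.log_inv, Real.log_pow] at h3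

lemma lyap1_term_lb (μ : Measure Ω) [IsProbabilityMeasure μ] {K : ℝ}
    (hf : Continuous f) (hB : Continuous B) (hBu : ∀ ω, IsUnit (B ω))
    (hK1 : 1 ≤ K) (hK : ∀ ω, ‖Ring.inverse (B ω)‖ ≤ K) (n : ℕ) (hn : 0 < n) :
    -Real.log K ≤ ((n : ℕ) : ℝ)⁻¹ * ∫ ω, Real.log ‖cocycle f B n ω‖ ∂μ := by
  have hN0 : (0:ℝ) < ((n : ℕ) : ℝ) := by exact_mod_cast hn
  have hmono : ∫ ω, (-((n : ℝ) * Real.log K)) ∂μ ≤ ∫ ω, Real.log ‖cocycle f B n ω‖ ∂μ :=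
    integral_mono (integrable_const _) (integrable_log_norm_cocycle μ hf hB hBu n)
      (log_norm_cocycle_lb hBu hK1 hK n)
  rw [integral_const, probReal_univ, one_smul] at hmono
  have h4 : ((n : ℕ) : ℝ)⁻¹ * (-((n : ℝ) * Real.log K)) ≤
      ((n : ℕ) : ℝ)⁻¹ * ∫ ω, Real.log ‖cocycle f B n ω‖ ∂μ :=
    mul_le_mul_of_nonneg_left hmono (by positivity)
  have h5 : ((n : ℕ) : ℝ)⁻¹ * (-((n : ℝ) * Real.log K)) = -Real.log K := by
    field_simp [mul_comm]
  linarith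

lemma inverse_continuous [CompleteSpace E] (hB : Continuous B) (hBu : ∀ ω, IsUnit (B ω)) :
    Continuous fun ω => Ring.inverse (B ω) := by
  rw [continuous_iff_continuousAt]; intro ω
  have h1 : ContinuousAt Ring.inverse (B ω) := by
    have := NormedRing.inverse_continuousAt (hBu ω).unit
    rwa [(hBu ω).unit_spec] at this
  exact ContinuousAt.comp (x := ω) h1 hB.continuousAt

end Aux2


set_option maxHeartbeats 1000000 in
/-- **Upper semicontinuity of the top Lyapunov exponent.**
For a continuous `GL(d, ℝ)`-valued generator `A` over a compact base with an invariant Borel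
probability measure, the top Lyapunov exponent `lyap1` is upper semicontinuous with respect
to uniform perturbations of the generator. -/
theorem lyap1_upperSemicontinuous
    {Ω : Type*} [MetricSpace Ω] [CompactSpace Ω] [MeasurableSpace Ω] [BorelSpace Ω]
    {d : ℕ} (f : Ω → Ω) (hf : Continuous f)
    (μ : Measure Ω) [IsProbabilityMeasure μ] (hμ : MeasurePreserving f μ μ)
    (A : Ω → EuclideanSpace ℝ (Fin d) →L[ℝ] EuclideanSpace ℝ (Fin d))
    (hA : Continuous A) (hAinv : ∀ ω, IsUnit (A ω))
    (ε : ℝ) (hε : 0 < ε) :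
    ∃ δ > (0 : ℝ), ∀ B : Ω → EuclideanSpace ℝ (Fin d) →L[ℝ] EuclideanSpace ℝ (Fin d),
      Continuous B → (∀ ω, IsUnit (B ω)) → (⨆ ω, ‖B ω - A ω‖) < δ →
      lyap1 μ f B < lyap1 μ f A + ε := by
  rcases Nat.eq_zero_or_pos d with hd | hd
  · subst hd
    refine ⟨1, one_pos, fun B hB hBu hsup => ?_⟩
    haveI hE : Subsingleton (EuclideanSpace ℝ (Fin 0)) :=
      ⟨fun a b => PiLp.ext fun i => i.elim0⟩
    haveI : Subsingleton (EuclideanSpace ℝ (Fin 0) →L[ℝ] EuclideanSpace ℝ (Fin 0)) :=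
      ⟨fun a b => ContinuousLinearMap.ext fun x => Subsingleton.elim _ _⟩
    have hBA : B = A := funext fun ω => Subsingleton.elim _ _
    rw [hBA]; linarith
  · haveI : Nonempty (Fin d) := ⟨⟨0, hd⟩⟩
    haveI hENT : Nontrivial (EuclideanSpace ℝ (Fin d)) := inferInstance
    -- bound on ‖A‖
    obtain ⟨M0, hM0⟩ := (isCompact_range hA.norm).bddAbove
    set M : ℝ := max M0 1 with hMdef
    have hM1 : (1:ℝ) ≤ M := le_max_right _ _
    have hAle : ∀ ω, ‖A ω‖ ≤ M := fun ω =>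
      le_trans (hM0 (Set.mem_range_self ω)) (le_max_left _ _)
    -- bound on inverse of A
    have hInvContA : Continuous fun ω => Ring.inverse (A ω) := inverse_continuous hA hAinv
    obtain ⟨K0, hK0⟩ := (isCompact_range hInvContA.norm).bddAbove
    set K : ℝ := max K0 1 with hKdef
    have hK1 : (1:ℝ) ≤ K := le_max_right _ _
    have hKA : ∀ ω, ‖Ring.inverse (A ω)‖ ≤ K := fun ω =>
      le_trans (hK0 (Set.mem_range_self ω)) (le_max_left _ _)
    -- choose n with term close to the infimum
    have hinf' : (⨅ n : {k : ℕ // 0 < k},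
        ((n : ℕ) : ℝ)⁻¹ * ∫ ω, Real.log ‖cocycle f A (n : ℕ) ω‖ ∂μ) < lyap1 μ f A + ε / 2 := by
      have : lyap1 μ f A < lyap1 μ f A + ε / 2 := by linarith
      exact this
    obtain ⟨n, hn⟩ := exists_lt_of_ciInf_lt hinf'
    have hN0 : (0:ℝ) < ((n : ℕ) : ℝ) := by exact_mod_cast n.2
    have hN1 : (1:ℝ) ≤ ((n : ℕ) : ℝ) := by exact_mod_cast n.2
    set c : ℝ := ((n : ℕ) : ℝ) * (M + 1) ^ (n : ℕ) * K ^ (n : ℕ) with hcdef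
    have hc0 : 0 < c := by positivity
    refine ⟨min 1 ((ε / 2) / (c + 1)), lt_min one_pos (by positivity), fun B hB hBu hsup => ?_⟩
    set δ : ℝ := min 1 ((ε / 2) / (c + 1)) with hδdef
    have hδpos : 0 < δ := lt_min one_pos (by positivity)
    have hδ1 : δ ≤ 1 := min_le_left _ _
    have hδε : δ ≤ (ε / 2) / (c + 1) := min_le_right _ _
    -- pointwise closeness
    have hcont : Continuous fun ω => ‖B ω - A ω‖ := (hB.sub hA).norm
    have hsub : ∀ ω, ‖B ω - A ω‖ ≤ δ := fun ω =>
      le_of_lt (lt_of_le_of_lt (le_ciSup (isCompact_range hcont).bddAbove ω) hsup)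
    have hBle : ∀ ω, ‖B ω‖ ≤ M + 1 := by
      intro ω
      have h1 : ‖B ω‖ - ‖A ω‖ ≤ ‖B ω - A ω‖ := norm_sub_norm_le _ _
      have := hsub ω
      have := hAle ω
      linarith
    have hAle' : ∀ ω, ‖A ω‖ ≤ M + 1 := fun ω => (hAle ω).trans (by linarith)
    have hdiff : ∀ ω, ‖cocycle f B (n : ℕ) ω - cocycle f A (n : ℕ) ω‖ ≤
        ((n : ℕ) : ℝ) * (M + 1) ^ (n : ℕ) * δ :=
      cocycle_sub_norm_le (by linarith) hAle' hBle hδpos.le hsub (n : ℕ)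
    -- pointwise log estimate
    have hlog : ∀ ω, Real.log ‖cocycle f B (n : ℕ) ω‖ ≤
        Real.log ‖cocycle f A (n : ℕ) ω‖ + ε / 2 := by
      intro ω
      set a := ‖cocycle f A (n : ℕ) ω‖ with hadef
      set b := ‖cocycle f B (n : ℕ) ω‖ with hbdef
      have hKN : (0:ℝ) < K ^ (n : ℕ) := by positivity
      have ha1 : 1 ≤ K ^ (n : ℕ) * a := one_le_pow_mul_norm_cocycle hAinv hKA (n : ℕ) ω
      have hainv : (K ^ (n : ℕ))⁻¹ ≤ a := by
        rw [inv_eq_one_div, div_le_iff₀ hKN]; nlinarith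
      have hapos : 0 < a := lt_of_lt_of_le (by positivity) hainv
      haveI := clm_nontrivial (E := EuclideanSpace ℝ (Fin d))
      have hbpos : 0 < b := norm_pos_iff.mpr (cocycle_isUnit hBu (n : ℕ) ω).ne_zero
      set r : ℝ := ((n : ℕ) : ℝ) * (M + 1) ^ (n : ℕ) * δ with hrdef
      have hr0 : 0 ≤ r := by positivity
      have hba : b ≤ a + r := by
        have h0 : b - a ≤ ‖cocycle f B (n : ℕ) ω - cocycle f A (n : ℕ) ω‖ :=
          norm_sub_norm_le _ _
        have := hdiff ω
        linarith
      have h1 : Real.log b ≤ Real.log (a + r) := Real.log_le_log hbpos hba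
      have h2 : Real.log ((a + r) / a) = Real.log (a + r) - Real.log a :=
        Real.log_div (by positivity) (ne_of_gt hapos)
      have h3 : Real.log ((a + r) / a) ≤ (a + r) / a - 1 :=
        Real.log_le_sub_one_of_pos (by positivity)
      have h4 : (a + r) / a - 1 = r / a := by field_simp; ring
      have h5 : r / a ≤ r * K ^ (n : ℕ) := by
        rw [div_le_iff₀ hapos]
        calc r = r * 1 := (mul_one r).symm
          _ ≤ r * (K ^ (n : ℕ) * a) := mul_le_mul_of_nonneg_left ha1 hr0
          _ = r * K ^ (n : ℕ) * a := by ring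
      have h6 : r * K ^ (n : ℕ) ≤ ε / 2 := by
        have he : r * K ^ (n : ℕ) = c * δ := by rw [hrdef, hcdef]; ring
        rw [he]
        calc c * δ ≤ c * ((ε / 2) / (c + 1)) := mul_le_mul_of_nonneg_left hδε hc0.le
          _ = (c * (ε / 2)) / (c + 1) := by ring
          _ ≤ ε / 2 := by
            rw [div_le_iff₀ (by linarith)]
            nlinarith
      linarith
    -- integrate
    have hintA := integrable_log_norm_cocycle μ hf hA hAinv (n : ℕ)
    have hintB := integrable_log_norm_cocycle μ hf hB hBu (n : ℕ)
    have hIle : ∫ ω, Real.log ‖cocycle f B (n : ℕ) ω‖ ∂μ ≤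
        (∫ ω, Real.log ‖cocycle f A (n : ℕ) ω‖ ∂μ) + ε / 2 := by
      have hintA2 : Integrable (fun ω => Real.log ‖cocycle f A (n : ℕ) ω‖ + ε / 2) μ :=
        hintA.add (integrable_const _)
      have h := integral_mono hintB hintA2 hlog
      rwa [integral_add hintA (integrable_const _), integral_const, probReal_univ,
        one_smul] at h
    -- lyap1 B is at most the n-th term
    have hInvContB : Continuous fun ω => Ring.inverse (B ω) := inverse_continuous hB hBu
    obtain ⟨KB0, hKB0⟩ := (isCompact_range hInvContB.norm).bddAbove
    have hKB1 : (1:ℝ) ≤ max KB0 1 := le_max_right _ _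
    have hKB : ∀ ω, ‖Ring.inverse (B ω)‖ ≤ max KB0 1 := fun ω =>
      le_trans (hKB0 (Set.mem_range_self ω)) (le_max_left _ _)
    have hblB : BddBelow (Set.range fun k : {k : ℕ // 0 < k} =>
        ((k : ℕ) : ℝ)⁻¹ * ∫ ω, Real.log ‖cocycle f B (k : ℕ) ω‖ ∂μ) := by
      refine ⟨-Real.log (max KB0 1), ?_⟩
      rintro x ⟨k, rfl⟩
      exact lyap1_term_lb μ hf hB hBu hKB1 hKB (k : ℕ) k.2
    have hle1 : lyap1 μ f B ≤
        ((n : ℕ) : ℝ)⁻¹ * ∫ ω, Real.log ‖cocycle f B (n : ℕ) ω‖ ∂μ := ciInf_le hblB n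
    have hNinv1 : ((n : ℕ) : ℝ)⁻¹ ≤ 1 := by
      rw [inv_le_one_iff₀]; right; exact hN1
    calc lyap1 μ f B ≤ ((n : ℕ) : ℝ)⁻¹ * ∫ ω, Real.log ‖cocycle f B (n : ℕ) ω‖ ∂μ := hle1
      _ ≤ ((n : ℕ) : ℝ)⁻¹ * ((∫ ω, Real.log ‖cocycle f A (n : ℕ) ω‖ ∂μ) + ε / 2) :=
          mul_le_mul_of_nonneg_left hIle (by positivity)
      _ = ((n : ℕ) : ℝ)⁻¹ * (∫ ω, Real.log ‖cocycle f A (n : ℕ) ω‖ ∂μ)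
          + ((n : ℕ) : ℝ)⁻¹ * (ε / 2) := by ring
      _ ≤ ((n : ℕ) : ℝ)⁻¹ * (∫ ω, Real.log ‖cocycle f A (n : ℕ) ω‖ ∂μ) + ε / 2 := by
          have : ((n : ℕ) : ℝ)⁻¹ * (ε / 2) ≤ 1 * (ε / 2) :=
            mul_le_mul_of_nonneg_right hNinv1 (by linarith)
          linarith
      _ < lyap1 μ f A + ε / 2 + ε / 2 := by linarith
      _ = lyap1 μ f A + ε := by ring
end

section
/- Let Ψ : ℝ × ℝ^m → ℝ^m be a C² flow (Ψ(0, ·) = id and Ψ(s, Ψ(t, x)) = Ψ(s+t, x)), let Ω ⊆ ℝ^m be a nonempty compact set invariant under the flow, and let φ : ℝ^m → ℝ^d be a C² map. Then there exists a constant C₂ > 0, depending only on Ψ, φ and Ω, such that for every Q ∈ ℕ with Q ≥ 1, every Δt > 0 with QΔt ≤ 1, every ω ∈ Ω and every v ∈ ℝ^m: ‖Dφ(ω)v‖ ≤ (1/Q) ∑_{j=0}^{Q−1} ‖Dφ(Ψ(jΔt, ω)) (D_x Ψ(jΔt, ω) v)‖ + (C₂/2) Q Δt ‖v‖. -/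
open Filter Topology

/-- **Sensitivity bound for delay-coordinate reconstructions.**
For a `C²` flow `Ψ` with compact invariant set `Ω` and a `C²` observation `φ`, there is a
constant `C₂ > 0` (depending only on `Ψ`, `φ` and `Ω`) such that for all `Q ≥ 1` and
`Δt > 0` with `QΔt ≤ 1`, every `ω ∈ Ω` and `v`:
`‖Dφ(ω)v‖ ≤ (1/Q) ∑_{j<Q} ‖Dφ(Ψ(jΔt, ω)) (D_x Ψ(jΔt, ω) v)‖ + (C₂/2) Q Δt ‖v‖`. -/
theorem delay_coordinate_sensitivity_bound
    {m d : ℕ}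
    (Ψ : ℝ × EuclideanSpace ℝ (Fin m) → EuclideanSpace ℝ (Fin m))
    (hΨ : ContDiff ℝ 2 Ψ)
    (hΨ0 : ∀ x, Ψ (0, x) = x)
    (hΨgrp : ∀ (s t : ℝ) (x : EuclideanSpace ℝ (Fin m)), Ψ (s, Ψ (t, x)) = Ψ (s + t, x))
    (Ω : Set (EuclideanSpace ℝ (Fin m))) (hΩc : IsCompact Ω) (hΩne : Ω.Nonempty)
    (hΩinv : ∀ (t : ℝ), ∀ ω ∈ Ω, Ψ (t, ω) ∈ Ω)
    (φ : EuclideanSpace ℝ (Fin m) → EuclideanSpace ℝ (Fin d)) (hφ : ContDiff ℝ 2 φ) :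
    ∃ C₂ > (0 : ℝ), ∀ (Q : ℕ), 1 ≤ Q → ∀ Δt : ℝ, 0 < Δt → (Q : ℝ) * Δt ≤ 1 →
      ∀ ω ∈ Ω, ∀ v : EuclideanSpace ℝ (Fin m),
        ‖fderiv ℝ φ ω v‖ ≤
          (Q : ℝ)⁻¹ * ∑ j ∈ Finset.range Q,
              ‖fderiv ℝ φ (Ψ ((j : ℝ) * Δt, ω))
                (fderiv ℝ (fun x => Ψ ((j : ℝ) * Δt, x)) ω v)‖
            + C₂ / 2 * (Q : ℝ) * Δt * ‖v‖ := by
  classical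
  have hΨd : Differentiable ℝ Ψ := hΨ.differentiable (by norm_num)
  have hφd : Differentiable ℝ φ := hφ.differentiable (by norm_num)
  set F : ℝ × EuclideanSpace ℝ (Fin m) → EuclideanSpace ℝ (Fin d) :=
    fun p => φ (Ψ p) with hFdef
  have hF : ContDiff ℝ 2 F := hφ.comp hΨ
  have hF' : ContDiff ℝ 1 (fderiv ℝ F) := hF.fderiv_right (by norm_num)
  -- key pointwise identity
  have key : ∀ (t : ℝ) (ω v : EuclideanSpace ℝ (Fin m)),
      fderiv ℝ φ (Ψ (t, ω)) (fderiv ℝ (fun x => Ψ (t, x)) ω v)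
        = fderiv ℝ F (t, ω) ((0 : ℝ), v) := by
    intro t ω v
    have h1 : HasFDerivAt (fun x : EuclideanSpace ℝ (Fin m) => Ψ (t, x))
        ((fderiv ℝ Ψ (t, ω)).comp (ContinuousLinearMap.inr ℝ ℝ (EuclideanSpace ℝ (Fin m)))) ω :=
      (hΨd (t, ω)).hasFDerivAt.comp ω (hasFDerivAt_prodMk_right t ω)
    have h2 : fderiv ℝ F (t, ω)
        = (fderiv ℝ φ (Ψ (t, ω))).comp (fderiv ℝ Ψ (t, ω)) :=
      fderiv_comp _ (hφd _) (hΨd _)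
    rw [h1.fderiv, h2]
    simp
  -- compact set for the bound
  set K : Set (ℝ × EuclideanSpace ℝ (Fin m)) := Set.Icc (-1 : ℝ) 2 ×ˢ Ω with hKdef
  have hK : IsCompact K := isCompact_Icc.prod hΩc
  obtain ⟨M, hM⟩ := hK.exists_bound_of_continuousOn
    ((hF'.continuous_fderiv one_ne_zero).continuousOn)
  set C : ℝ := max M 0 + 1 with hCdef
  have hCpos : (0 : ℝ) < C := by positivity
  have hMC : ∀ x ∈ K, ‖fderiv ℝ (fderiv ℝ F) x‖ ≤ C := fun x hx =>
    le_trans (hM x hx) (by simp only [hCdef]; linarith [le_max_left M (0:ℝ)])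
  refine ⟨C, hCpos, ?_⟩
  intro Q hQ Δt hΔt hQΔt ω hω v
  -- Lipschitz on the segment {ω}-slice
  have hLip : ∀ x ∈ Set.Icc (-1 : ℝ) 2, ∀ y ∈ Set.Icc (-1 : ℝ) 2,
      ‖fderiv ℝ F (y, ω) - fderiv ℝ F (x, ω)‖ ≤ C * ‖((y, ω) : ℝ × EuclideanSpace ℝ (Fin m)) - (x, ω)‖ := by
    intro x hx y hy
    have hconv : Convex ℝ (Set.Icc (-1 : ℝ) 2 ×ˢ ({ω} : Set (EuclideanSpace ℝ (Fin m)))) :=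
      (convex_Icc _ _).prod (convex_singleton ω)
    have hsub : Set.Icc (-1 : ℝ) 2 ×ˢ ({ω} : Set (EuclideanSpace ℝ (Fin m))) ⊆ K := by
      intro p hp
      exact ⟨hp.1, by rw [hp.2]; exact hω⟩
    exact hconv.norm_image_sub_le_of_norm_fderiv_le
      (fun z _ => (hF'.differentiable one_ne_zero).differentiableAt)
      (fun z hz => hMC z (hsub hz))
      (Set.mk_mem_prod hx rfl) (Set.mk_mem_prod hy rfl)
  have hφ0 : fderiv ℝ φ ω v = fderiv ℝ F ((0 : ℝ), ω) ((0 : ℝ), v) := by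
    have h := key 0 ω v
    have hid : (fun x : EuclideanSpace ℝ (Fin m) => Ψ (0, x)) = id := funext hΨ0
    rw [hid, fderiv_id, hΨ0] at h
    simpa using h
  -- per-j bound
  have hjb : ∀ j ∈ Finset.range Q,
      ‖fderiv ℝ φ ω v‖ ≤
        ‖fderiv ℝ φ (Ψ ((j : ℝ) * Δt, ω)) (fderiv ℝ (fun x => Ψ ((j : ℝ) * Δt, x)) ω v)‖
          + C * ((j : ℝ) * Δt) * ‖v‖ := by
    intro j hj
    have hjQ : (j : ℝ) ≤ (Q : ℝ) := by
      exact_mod_cast (Finset.mem_range.mp hj).le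
    have hjt0 : 0 ≤ (j : ℝ) * Δt := by positivity
    have hjt1 : (j : ℝ) * Δt ≤ 1 :=
      le_trans (mul_le_mul_of_nonneg_right hjQ hΔt.le) hQΔt
    rw [key, hφ0]
    have heq : fderiv ℝ F ((0 : ℝ), ω) ((0 : ℝ), v)
        = fderiv ℝ F (((j : ℝ) * Δt, ω)) ((0 : ℝ), v)
          + (fderiv ℝ F ((0 : ℝ), ω) - fderiv ℝ F (((j : ℝ) * Δt, ω))) ((0 : ℝ), v) := by
      simp
    rw [heq]
    refine le_trans (norm_add_le _ _) (add_le_add_right ?_ _)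
    have h1 : ‖(fderiv ℝ F ((0 : ℝ), ω) - fderiv ℝ F (((j : ℝ) * Δt, ω))) ((0 : ℝ), v)‖
        ≤ ‖fderiv ℝ F ((0 : ℝ), ω) - fderiv ℝ F (((j : ℝ) * Δt, ω))‖ * ‖(((0 : ℝ), v) : ℝ × EuclideanSpace ℝ (Fin m))‖ :=
      ContinuousLinearMap.le_opNorm _ _
    have h2 : ‖fderiv ℝ F ((0 : ℝ), ω) - fderiv ℝ F (((j : ℝ) * Δt, ω))‖
        ≤ C * ((j : ℝ) * Δt) := by
      have h := hLip ((j : ℝ) * Δt) ⟨by linarith, by linarith⟩ 0 (by norm_num)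
      have hnorm : ‖(((0 : ℝ), ω) : ℝ × EuclideanSpace ℝ (Fin m)) - (((j : ℝ) * Δt, ω))‖
          = (j : ℝ) * Δt := by
        simp [Prod.norm_def, abs_of_nonneg hΔt.le, max_eq_left hjt0]
      rw [hnorm] at h
      exact h
    have h3 : ‖(((0 : ℝ), v) : ℝ × EuclideanSpace ℝ (Fin m))‖ = ‖v‖ := by
      simp [Prod.norm_def]
    calc ‖(fderiv ℝ F ((0 : ℝ), ω) - fderiv ℝ F (((j : ℝ) * Δt, ω))) ((0 : ℝ), v)‖
        ≤ ‖fderiv ℝ F ((0 : ℝ), ω) - fderiv ℝ F (((j : ℝ) * Δt, ω))‖ * ‖v‖ := by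
          rw [← h3]; exact h1
      _ ≤ C * ((j : ℝ) * Δt) * ‖v‖ :=
          mul_le_mul_of_nonneg_right h2 (norm_nonneg _)
  -- sum up
  have hsum : (Q : ℝ) * ‖fderiv ℝ φ ω v‖ ≤
      (∑ j ∈ Finset.range Q,
        ‖fderiv ℝ φ (Ψ ((j : ℝ) * Δt, ω)) (fderiv ℝ (fun x => Ψ ((j : ℝ) * Δt, x)) ω v)‖)
      + C * Δt * ‖v‖ * ((Q : ℝ) * (Q : ℝ) / 2) := by
    have h := Finset.sum_le_sum hjb
    rw [Finset.sum_const, Finset.card_range, nsmul_eq_mul, Finset.sum_add_distrib] at h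
    refine h.trans (add_le_add_right ?_ _)
    have hgauss : (∑ j ∈ Finset.range Q, (j : ℝ)) = (Q : ℝ) * ((Q : ℝ) - 1) / 2 := by
      have hg := Finset.sum_range_id_mul_two Q
      have h2 : ((∑ j ∈ Finset.range Q, j : ℕ) : ℝ) * 2 = (Q : ℝ) * ((Q : ℝ) - 1) := by
        rw [← Nat.cast_ofNat, ← Nat.cast_mul, hg]
        push_cast [Nat.cast_sub hQ]
        ring
      push_cast at h2 ⊢
      linarith
    have hexp : ∀ j ∈ Finset.range Q, C * ((j : ℝ) * Δt) * ‖v‖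
        = (C * Δt * ‖v‖) * (j : ℝ) := by intro j _; ring
    rw [Finset.sum_congr rfl hexp, ← Finset.mul_sum, hgauss]
    have hQ1 : (1 : ℝ) ≤ (Q : ℝ) := by exact_mod_cast hQ
    have hle : (Q : ℝ) * ((Q : ℝ) - 1) / 2 ≤ (Q : ℝ) * (Q : ℝ) / 2 := by nlinarith
    have hcv : 0 ≤ C * Δt * ‖v‖ := by positivity
    exact mul_le_mul_of_nonneg_left hle hcv
  have hQpos : (0 : ℝ) < (Q : ℝ) := by exact_mod_cast hQ
  rw [← mul_le_mul_iff_right₀ hQpos]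
  calc (Q : ℝ) * ‖fderiv ℝ φ ω v‖
      ≤ _ := hsum
    _ = (Q : ℝ) * ((Q : ℝ)⁻¹ * (∑ j ∈ Finset.range Q,
          ‖fderiv ℝ φ (Ψ ((j : ℝ) * Δt, ω)) (fderiv ℝ (fun x => Ψ ((j : ℝ) * Δt, x)) ω v)‖)
        + C / 2 * (Q : ℝ) * Δt * ‖v‖) := by
        rw [mul_add, mul_inv_cancel_left₀ hQpos.ne']
        ring
end

section
/- Let (Ω, μ) be a probability space and f : Ω → Ω an invertible measure-preserving transformation (f is bimeasurable and both f and f⁻¹ preserve μ). Let U be the unitary Koopman operator on L²(μ; ℂ) given by Uψ = ψ∘f, and let D be the closure in L²(μ; ℂ) of the linear span of all eigenfunctions of U. Then for every φ ∈ L²(μ; ℂ) and every ε > 0 there exist a finite-dimensional subspace W of L²(μ; ℂ) containing the constant functions and a set S ⊆ ℕ of natural density 1 such that for every n ∈ S, | ‖U^n φ − π_W U^n φ‖ − ‖φ − P_D φ‖ | ≤ ε, where π_W and P_D denote the orthogonal projections onto W and D respectively. -/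
open MeasureTheory Filter Topology

/-- A set `S ⊆ ℕ` has natural density one. -/
def hasDensityOne (S : Set ℕ) : Prop :=
  Tendsto (fun N : ℕ =>
    (∑ n ∈ Finset.range N, S.indicator (fun _ => (1 : ℝ)) n) / (N : ℝ)) atTop (𝓝 1)

set_option maxHeartbeats 1000000 in
/-- **Asymptotic error of the direct forecast.**
Let `U` be the unitary Koopman operator `Uψ = ψ ∘ f` of an invertible measure-preserving
transformation `f` of a probability space, and let `D` be the closure of the span of all
eigenfunctions of `U`.  For every `φ ∈ L²(μ; ℂ)` and `ε > 0` there is a finite-dimensional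
hypothesis space `W` containing the constants and a set `S ⊆ ℕ` of density one along which
the direct-forecast error `‖U^n φ - π_W U^n φ‖` is within `ε` of `‖φ - P_D φ‖`. -/
theorem direct_forecast_error_large_hypothesis_space
    {Ω : Type*} [MeasurableSpace Ω] (μ : Measure Ω) [IsProbabilityMeasure μ]
    (f : Ω ≃ᵐ Ω) (hf : MeasurePreserving f μ μ) (hf' : MeasurePreserving f.symm μ μ)
    (U : Lp ℂ 2 μ →L[ℂ] Lp ℂ 2 μ)
    (hU : ∀ ψ : Lp ℂ 2 μ, (U ψ : Ω → ℂ) =ᵐ[μ] fun ω => ψ (f ω))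
    (φ : Lp ℂ 2 μ) (ε : ℝ) (hε : 0 < ε) :
    ∃ W : Submodule ℂ (Lp ℂ 2 μ), ∃ _ : FiniteDimensional ℂ W,
      (MemLp.toLp (fun _ => (1 : ℂ)) (memLp_const 1)) ∈ W ∧
      ∃ S : Set ℕ, hasDensityOne S ∧ ∀ n ∈ S,
        |‖(U ^ n) φ - (Submodule.orthogonalProjectionOnto W ((U ^ n) φ) : Lp ℂ 2 μ)‖ -
          ‖φ - (Submodule.orthogonalProjectionOnto
              ((Submodule.span ℂ
                {ψ : Lp ℂ 2 μ | ψ ≠ 0 ∧ ∃ c : ℂ, U ψ = c • ψ}).topologicalClosure) φ :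
            Lp ℂ 2 μ)‖| ≤ ε := by
  classical
  set E : Set (Lp ℂ 2 μ) := {ψ : Lp ℂ 2 μ | ψ ≠ 0 ∧ ∃ c : ℂ, U ψ = c • ψ} with hEdef
  set D : Submodule ℂ (Lp ℂ 2 μ) := (Submodule.span ℂ E).topologicalClosure with hDdef
  -- `U` preserves norms
  have hnorm : ∀ ψ : Lp ℂ 2 μ, ‖U ψ‖ = ‖ψ‖ := by
    intro ψ
    rw [Lp.norm_def, Lp.norm_def, eLpNorm_congr_ae (hU ψ)]
    congr 1
    exact eLpNorm_comp_measurePreserving (Lp.aestronglyMeasurable ψ) hf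
  -- `U` preserves inner products
  have hinner : ∀ x y : Lp ℂ 2 μ, (inner ℂ (U x) (U y) : ℂ) = inner ℂ x y := by
    intro x y
    exact LinearIsometry.inner_map_map ⟨U.toLinearMap, hnorm⟩ x y
  -- iterates
  have hpow_apply : ∀ (n : ℕ) (x : Lp ℂ 2 μ), (U ^ (n + 1)) x = U ((U ^ n) x) := by
    intro n x
    rw [pow_succ']
    rfl
  have hnorm_pow : ∀ (n : ℕ) (x : Lp ℂ 2 μ), ‖(U ^ n) x‖ = ‖x‖ := by
    intro n
    induction n with
    | zero => simp
    | succ n ih => intro x; rw [hpow_apply, hnorm, ih]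
  have hinner_pow : ∀ (n : ℕ) (x y : Lp ℂ 2 μ),
      (inner ℂ ((U ^ n) x) ((U ^ n) y) : ℂ) = inner ℂ x y := by
    intro n
    induction n with
    | zero => simp
    | succ n ih => intro x y; rw [hpow_apply, hpow_apply, hinner, ih]
  -- the constant function is an eigenfunction
  set c1 : Lp ℂ 2 μ := MemLp.toLp (fun _ => (1 : ℂ)) (memLp_const 1) with hc1def
  have hc1_ae : (c1 : Ω → ℂ) =ᵐ[μ] fun _ => (1 : ℂ) := MemLp.coeFn_toLp _
  have hc1_ne : c1 ≠ 0 := by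
    intro h
    have h0 : (c1 : Ω → ℂ) =ᵐ[μ] 0 := h ▸ Lp.coeFn_zero ℂ 2 μ
    have : (fun _ : Ω => (1 : ℂ)) =ᵐ[μ] 0 := hc1_ae.symm.trans h0
    obtain ⟨ω, hω⟩ := this.exists
    exact one_ne_zero hω
  have hUc1 : U c1 = c1 := by
    refine Lp.ext ?_
    refine (hU c1).trans ?_
    have h1 : (fun ω => c1 (f ω)) =ᵐ[μ] fun _ => (1 : ℂ) :=
      hf.quasiMeasurePreserving.ae_eq_comp hc1_ae
    exact h1.trans hc1_ae.symm
  have hc1E : c1 ∈ E := ⟨hc1_ne, 1, by rw [one_smul]; exact hUc1⟩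
  -- approximate the projection onto D by a finite combination of eigenfunctions
  set Pφ : Lp ℂ 2 μ := (Submodule.orthogonalProjectionOnto D φ : Lp ℂ 2 μ) with hPφdef
  have hPφ_closure : Pφ ∈ closure ((Submodule.span ℂ E : Submodule ℂ (Lp ℂ 2 μ)) : Set (Lp ℂ 2 μ)) := by
    rw [← Submodule.topologicalClosure_coe, SetLike.mem_coe]
    exact SetLike.coe_mem _
  obtain ⟨v, hv_mem, hv_close⟩ : ∃ v ∈ Submodule.span ℂ E, ‖Pφ - v‖ < ε := by
    obtain ⟨v, hv1, hv2⟩ := Metric.mem_closure_iff.mp hPφ_closure ε hε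
    exact ⟨v, hv1, by rwa [dist_eq_norm] at hv2⟩
  obtain ⟨t, htE, hvt⟩ := Submodule.mem_span_finite_of_mem_span hv_mem
  -- the hypothesis space
  set G : Set (Lp ℂ 2 μ) := insert c1 (t : Set (Lp ℂ 2 μ)) with hGdef
  have hGE : G ⊆ E := by
    intro x hx
    rcases hx with rfl | hx
    · exact hc1E
    · exact htE hx
  set W : Submodule ℂ (Lp ℂ 2 μ) := Submodule.span ℂ G with hWdef
  haveI hWfin : FiniteDimensional ℂ W :=
    FiniteDimensional.span_of_finite ℂ (t.finite_toSet.insert c1)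
  have hc1W : c1 ∈ W := Submodule.subset_span (Set.mem_insert _ _)
  have hvW : v ∈ W := by
    refine Submodule.span_mono (Set.subset_insert _ _) ?_
    exact hvt
  -- U maps W into W
  have hUW : ∀ x ∈ W, U x ∈ W := by
    intro x hx
    have hmap : Submodule.map (U : Lp ℂ 2 μ →ₗ[ℂ] Lp ℂ 2 μ) W ≤ W := by
      rw [hWdef, Submodule.map_span, Submodule.span_le]
      rintro y ⟨ψ, hψ, rfl⟩
      obtain ⟨-, c, hc⟩ := hGE hψ
      show U ψ ∈ W
      rw [hc]
      exact W.smul_mem c (Submodule.subset_span hψ)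
    exact hmap ⟨x, hx, rfl⟩
  have hUnW : ∀ (n : ℕ), ∀ x ∈ W, (U ^ n) x ∈ W := by
    intro n
    induction n with
    | zero => intro x hx; simpa using hx
    | succ n ih => intro x hx; rw [hpow_apply]; exact hUW _ (ih x hx)
  -- the residual is orthogonal to D, and its iterates are orthogonal to W
  set w : Lp ℂ 2 μ := φ - Pφ with hwdef
  have hwD : w ∈ Dᗮ := Submodule.sub_starProjection_mem_orthogonal φ
  have hUnwW : ∀ n : ℕ, (U ^ n) w ∈ Wᗮ := by
    intro n
    rw [Submodule.mem_orthogonal]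
    intro u hu
    induction hu using Submodule.span_induction with
    | mem ψ hψ =>
      obtain ⟨hψne, c, hc⟩ := hGE hψ
      have hc_ne : c ≠ 0 := by
        intro h0
        rw [h0, zero_smul] at hc
        have := hnorm ψ
        rw [hc, norm_zero] at this
        exact hψne (norm_eq_zero.mp this.symm)
      have hUψ : ∀ m : ℕ, (U ^ m) ψ = c ^ m • ψ := by
        intro m
        induction m with
        | zero => simp
        | succ m ih =>
          rw [hpow_apply, ih, U.map_smul, hc, smul_smul, ← pow_succ]
        -- c^m * c = c^(m+1)
      have hψeq : ψ = (c ^ n)⁻¹ • (U ^ n) ψ := by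
        rw [hUψ n, smul_smul, inv_mul_cancel₀ (pow_ne_zero n hc_ne), one_smul]
      have hψD : ψ ∈ D := by
        refine Submodule.le_topologicalClosure _ ?_
        exact Submodule.subset_span (hGE hψ)
      have hψw : (inner ℂ ψ w : ℂ) = 0 := hwD ψ hψD
      calc (inner ℂ ψ ((U ^ n) w) : ℂ)
          = inner ℂ ((c ^ n)⁻¹ • (U ^ n) ψ) ((U ^ n) w) := by rw [← hψeq]
        _ = starRingEnd ℂ (c ^ n)⁻¹ * inner ℂ ((U ^ n) ψ) ((U ^ n) w) := by
            rw [inner_smul_left]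
        _ = starRingEnd ℂ (c ^ n)⁻¹ * inner ℂ ψ w := by rw [hinner_pow]
        _ = 0 := by rw [hψw, mul_zero]
    | zero => simp
    | add x y hx hy ihx ihy => rw [inner_add_left, ihx, ihy, add_zero]
    | smul c x hx ihx => rw [inner_smul_left, ihx, mul_zero]
  -- assemble
  refine ⟨W, hWfin, hc1W, Set.univ, ?_, ?_⟩
  · unfold hasDensityOne
    refine Tendsto.congr' ?_ tendsto_const_nhds
    filter_upwards [eventually_ge_atTop 1] with N hN
    simp [Set.indicator_univ, div_self, Nat.cast_ne_zero, Nat.one_le_iff_ne_zero.mp hN]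
  intro n _
  set r : Lp ℂ 2 μ := Pφ - v with hrdef
  have hφ_dec : φ = v + (r + w) := by rw [hrdef, hwdef]; abel
  have hproj_v : (Submodule.orthogonalProjectionOnto W ((U ^ n) v) : Lp ℂ 2 μ) = (U ^ n) v :=
    Submodule.starProjection_eq_self_iff.mpr (hUnW n v hvW)
  have hproj_w : Submodule.orthogonalProjectionOnto W ((U ^ n) w) = 0 :=
    Submodule.orthogonalProjectionOnto_apply_of_mem_orthogonal (hUnwW n)
  have key : (U ^ n) φ - (Submodule.orthogonalProjectionOnto W ((U ^ n) φ) : Lp ℂ 2 μ)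
      = (U ^ n) w + ((U ^ n) r - (Submodule.orthogonalProjectionOnto W ((U ^ n) r) : Lp ℂ 2 μ)) := by
    have h1 : (U ^ n) φ = (U ^ n) v + ((U ^ n) r + (U ^ n) w) := by
      rw [hφ_dec]; simp only [map_add]
    rw [h1, map_add, map_add, hproj_w, Submodule.coe_add, Submodule.coe_add, hproj_v,
      ZeroMemClass.coe_zero]
    abel
  have hr_small : ‖(U ^ n) r - (Submodule.orthogonalProjectionOnto W ((U ^ n) r) : Lp ℂ 2 μ)‖ ≤ ‖r‖ := by
    have hpyth := Submodule.norm_sq_eq_add_norm_sq_projection ((U ^ n) r) W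
    have horth : ((U ^ n) r - (Submodule.orthogonalProjectionOnto W ((U ^ n) r) : Lp ℂ 2 μ))
        = (Submodule.orthogonalProjectionOnto Wᗮ ((U ^ n) r) : Lp ℂ 2 μ) := by
      rw [eq_comm]
      exact Submodule.starProjection_orthogonal_val _
    rw [horth]
    have hcoe : ‖(Submodule.orthogonalProjectionOnto Wᗮ ((U ^ n) r) : Lp ℂ 2 μ)‖
        = ‖Submodule.orthogonalProjectionOnto Wᗮ ((U ^ n) r)‖ := rfl
    have h2 : ‖(Submodule.orthogonalProjectionOnto Wᗮ ((U ^ n) r) : Lp ℂ 2 μ)‖ ≤ ‖(U ^ n) r‖ := by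
      nlinarith [norm_nonneg ((Submodule.orthogonalProjectionOnto Wᗮ ((U ^ n) r) : Lp ℂ 2 μ)),
        norm_nonneg ((U ^ n) r), sq_nonneg ‖Submodule.orthogonalProjectionOnto W ((U ^ n) r)‖, hpyth, hcoe]
    rw [hnorm_pow] at h2
    exact h2
  have habs : |‖(U ^ n) w + ((U ^ n) r - (Submodule.orthogonalProjectionOnto W ((U ^ n) r) : Lp ℂ 2 μ))‖
      - ‖(U ^ n) w‖| ≤ ‖(U ^ n) r - (Submodule.orthogonalProjectionOnto W ((U ^ n) r) : Lp ℂ 2 μ)‖ := by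
    simpa [add_sub_cancel_left] using
      abs_norm_sub_norm_le ((U ^ n) w + ((U ^ n) r
        - (Submodule.orthogonalProjectionOnto W ((U ^ n) r) : Lp ℂ 2 μ))) ((U ^ n) w)
  rw [key, ← hnorm_pow n w]
  exact le_trans habs (le_trans hr_small hv_close.le)
end

section
/- Let (Ω, μ) be a probability space and f : Ω → Ω a measure-preserving transformation that is weakly mixing in the sense that for all α, β ∈ L²(μ; ℂ), (1/N) ∑_{n=0}^{N−1} | ⟨α∘f^n, β⟩ − (∫α dμ)(conj ∫β dμ) | → 0 as N → ∞. Let U be the Koopman operator Uψ = ψ∘f on L²(μ; ℂ), let W be a finite-dimensional subspace of L²(μ; ℂ) containing the constant functions, and let π_W be the orthogonal projection onto W. Then for every φ ∈ L²(μ; ℂ) there exists a set S ⊆ ℕ of natural density 1 such that lim_{n ∈ S, n → ∞} ‖U^n φ − π_W U^n φ‖ = ‖φ − ∫φ dμ‖_{L²(μ)}. -/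
open MeasureTheory Filter Topology

lemma kvn_density_zero {a : ℕ → ℝ} (ha : ∀ n, 0 ≤ a n)
    (hc : Tendsto (fun N : ℕ => (∑ n ∈ Finset.range N, a n) / N) atTop (𝓝 0))
    (k : ℕ) :
    Tendsto (fun N : ℕ =>
      (∑ n ∈ Finset.range N, ({m : ℕ | 1 / (k + 1 : ℝ) ≤ a m}).indicator
        (fun _ => (1:ℝ)) n) / N) atTop (𝓝 0) := by
  have hknn : (0:ℝ) < (k:ℝ) + 1 := by positivity
  apply squeeze_zero (g := fun N => ((k:ℝ)+1) * ((∑ n ∈ Finset.range N, a n) / N))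
  · intro N
    refine div_nonneg (Finset.sum_nonneg fun n _ => Set.indicator_nonneg (fun _ _ => zero_le_one) n)
      (Nat.cast_nonneg N)
  · intro N
    rw [← mul_div_assoc]
    apply div_le_div_of_nonneg_right ?_ (Nat.cast_nonneg N)
    rw [Finset.mul_sum]
    refine Finset.sum_le_sum fun n _ => ?_
    by_cases hn : n ∈ {m : ℕ | 1 / (k + 1 : ℝ) ≤ a m}
    · rw [Set.indicator_of_mem hn]
      have := hn
      rw [Set.mem_setOf_eq, div_le_iff₀ hknn] at this
      linarith [this]
    · rw [Set.indicator_of_notMem hn]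
      exact mul_nonneg (by positivity) (ha n)
  · simpa using hc.const_mul ((k:ℝ)+1)

lemma kvn {a : ℕ → ℝ} (ha : ∀ n, 0 ≤ a n)
    (hc : Tendsto (fun N : ℕ => (∑ n ∈ Finset.range N, a n) / N) atTop (𝓝 0)) :
    ∃ S : Set ℕ, hasDensityOne S ∧ Tendsto a (atTop ⊓ Filter.principal S) (𝓝 0) := by
  classical
  set A : ℕ → Set ℕ := fun k => {m : ℕ | 1 / (k + 1 : ℝ) ≤ a m} with hA
  have hT : ∀ k : ℕ, ∃ T : ℕ, ∀ M : ℕ, T ≤ M →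
      (∑ n ∈ Finset.range M, (A k).indicator (fun _ => (1:ℝ)) n) / M < 1 / ((k:ℝ)+1) := by
    intro k
    have h0 : (0:ℝ) < 1 / ((k:ℝ)+1) := by positivity
    have := (kvn_density_zero ha hc k).eventually_lt_const h0
    rw [eventually_atTop] at this
    obtain ⟨T, hT⟩ := this
    exact ⟨T, hT⟩
  choose T hT using hT
  -- strictly increasing sequence of thresholds
  set N : ℕ → ℕ := fun k => Nat.rec (T 0) (fun k Nk => max (Nk + 1) (T (k+1))) k with hN
  have hNsucc : ∀ k, N (k+1) = max (N k + 1) (T (k+1)) := fun k => rfl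
  have hNmono : StrictMono N :=
    strictMono_nat_of_lt_succ fun k => by
      rw [hNsucc]; exact lt_of_lt_of_le (Nat.lt_succ_self _) (le_max_left _ _)
  have hTN : ∀ k, T k ≤ N k := by
    intro k
    cases k with
    | zero => exact le_refl _
    | succ k => rw [hNsucc]; exact le_max_right _ _
  set S : Set ℕ := {n | ∀ k, N k ≤ n → n < N (k+1) → a n < 1 / ((k:ℝ)+1)} with hS
  -- a key locator
  have hloc : ∀ n : ℕ, N 0 ≤ n → N (Nat.findGreatest (fun j => N j ≤ n) n) ≤ n
      ∧ n < N (Nat.findGreatest (fun j => N j ≤ n) n + 1) := by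
    intro n hn
    have h1 : N (Nat.findGreatest (fun j => N j ≤ n) n) ≤ n :=
      Nat.findGreatest_spec (P := fun j => N j ≤ n) (m := 0) (Nat.zero_le n) hn
    constructor
    · exact h1
    · by_contra hcon
      push_neg at hcon
      set j := Nat.findGreatest (fun j => N j ≤ n) n
      have hj1n : j + 1 ≤ n := le_trans (hNmono.le_apply) hcon
      exact absurd hcon (Nat.findGreatest_is_greatest (P := fun j => N j ≤ n) (k := j+1) (Nat.lt_succ_self j) hj1n)
  refine ⟨S, ?_, ?_⟩
  · -- density one
    have hind_nonneg : ∀ (B : Set ℕ) (n : ℕ), 0 ≤ B.indicator (fun _ => (1:ℝ)) n :=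
      fun B n => Set.indicator_nonneg (fun _ _ => zero_le_one) n
    have hDc : Tendsto (fun M : ℕ =>
        (∑ n ∈ Finset.range M, (Sᶜ).indicator (fun _ => (1:ℝ)) n) / M) atTop (𝓝 0) := by
      rw [Metric.tendsto_nhds]
      intro ε hε
      obtain ⟨k₀, hk₀⟩ := exists_nat_one_div_lt (show (0:ℝ) < ε/2 by linarith)
      have htend : Tendsto (fun M : ℕ => ((N k₀ : ℝ)) / M) atTop (𝓝 0) :=
        tendsto_const_div_atTop_nhds_zero_nat _
      filter_upwards [htend.eventually_lt_const (show (0:ℝ) < ε/2 by linarith),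
        eventually_ge_atTop (max 1 (N k₀))] with M h1 h2
      have hM1 : 1 ≤ M := le_trans (le_max_left _ _) h2
      have hMk₀ : N k₀ ≤ M := le_trans (le_max_right _ _) h2
      have hMpos : (0:ℝ) < M := by exact_mod_cast hM1
      set kM := Nat.findGreatest (fun j => N j ≤ M) M with hkM
      have hN0M : N 0 ≤ M := le_trans (hNmono.monotone (Nat.zero_le k₀)) hMk₀
      obtain ⟨hkM1, hkM2⟩ := hloc M hN0M
      rw [← hkM] at hkM1 hkM2
      have hk₀kM : k₀ ≤ kM := Nat.le_findGreatest (le_trans hNmono.le_apply hMk₀) hMk₀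
      -- pointwise indicator bound
      have hpt : ∀ n ∈ Finset.range M, (Sᶜ).indicator (fun _ => (1:ℝ)) n ≤
          ({m : ℕ | m < N k₀}).indicator (fun _ => (1:ℝ)) n
            + (A kM).indicator (fun _ => (1:ℝ)) n := by
        intro n hn
        rw [Finset.mem_range] at hn
        by_cases hnS : n ∈ Sᶜ
        · rw [Set.indicator_of_mem hnS]
          rcases lt_or_ge n (N k₀) with h | h
          · have h' : ({m : ℕ | m < N k₀}).indicator (fun _ => (1:ℝ)) n = 1 :=
              Set.indicator_of_mem (show n ∈ {m : ℕ | m < N k₀} from h) _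
            have := hind_nonneg (A kM) n
            rw [h']
            linarith
          · have hnA : n ∈ A kM := by
              rw [hS] at hnS
              rw [Set.mem_compl_iff, Set.mem_setOf_eq] at hnS
              push_neg at hnS
              obtain ⟨j, hj1, hj2, hj3⟩ := hnS
              have hjkM : j ≤ kM := by
                by_contra hcon
                push_neg at hcon
                have h5 : N (kM + 1) ≤ N j := hNmono.monotone hcon
                have h6 : N (kM+1) ≤ n := le_trans h5 hj1
                omega
              rw [hA]
              rw [Set.mem_setOf_eq]
              refine le_trans ?_ hj3
              apply one_div_le_one_div_of_le (by positivity)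
              have : (j:ℝ) ≤ (kM:ℝ) := by exact_mod_cast hjkM
              linarith
            have h' : (A kM).indicator (fun _ => (1:ℝ)) n = 1 := Set.indicator_of_mem hnA _
            have := hind_nonneg {m : ℕ | m < N k₀} n
            rw [h']
            linarith
        · rw [Set.indicator_of_notMem hnS]
          have := hind_nonneg {m : ℕ | m < N k₀} n
          have := hind_nonneg (A kM) n
          linarith
      -- counting
      have hsum1 : (∑ n ∈ Finset.range M, ({m : ℕ | m < N k₀}).indicator (fun _ => (1:ℝ)) n)
          ≤ (N k₀ : ℝ) := by
        have heq : ∀ n : ℕ, ({m : ℕ | m < N k₀}).indicator (fun _ => (1:ℝ)) n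
            = if n < N k₀ then (1:ℝ) else 0 := by
          intro n; simp [Set.indicator_apply]
        simp_rw [heq]
        rw [Finset.sum_boole]
        have hsub : (Finset.range M).filter (fun n => n < N k₀) ⊆ Finset.range (N k₀) := by
          intro x hx
          rw [Finset.mem_filter] at hx
          exact Finset.mem_range.mpr hx.2
        have := Finset.card_le_card hsub
        rw [Finset.card_range] at this
        exact_mod_cast this
      have hsum2 : (∑ n ∈ Finset.range M, (A kM).indicator (fun _ => (1:ℝ)) n)
          ≤ (M:ℝ) * (1/((kM:ℝ)+1)) := by
        have hTkM : T kM ≤ M := le_trans (hTN kM) hkM1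
        have := hT kM M hTkM
        rw [div_lt_iff₀ hMpos] at this
        linarith [this]
      have hsum : (∑ n ∈ Finset.range M, (Sᶜ).indicator (fun _ => (1:ℝ)) n)
          ≤ (N k₀ : ℝ) + (M:ℝ) * (1/((kM:ℝ)+1)) := by
        calc (∑ n ∈ Finset.range M, (Sᶜ).indicator (fun _ => (1:ℝ)) n)
            ≤ ∑ n ∈ Finset.range M, (({m : ℕ | m < N k₀}).indicator (fun _ => (1:ℝ)) n
              + (A kM).indicator (fun _ => (1:ℝ)) n) := Finset.sum_le_sum hpt
          _ = _ + _ := Finset.sum_add_distrib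
          _ ≤ (N k₀ : ℝ) + (M:ℝ) * (1/((kM:ℝ)+1)) := add_le_add hsum1 hsum2
      have hkMk₀ : (1:ℝ)/((kM:ℝ)+1) ≤ 1/((k₀:ℝ)+1) := by
        apply one_div_le_one_div_of_le (by positivity)
        have : (k₀:ℝ) ≤ (kM:ℝ) := by exact_mod_cast hk₀kM
        linarith
      have hnn : 0 ≤ (∑ n ∈ Finset.range M, (Sᶜ).indicator (fun _ => (1:ℝ)) n) / M :=
        div_nonneg (Finset.sum_nonneg fun n _ => hind_nonneg _ n) (le_of_lt hMpos)
      rw [Real.dist_eq, sub_zero, abs_of_nonneg hnn]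
      have hfinal : (∑ n ∈ Finset.range M, (Sᶜ).indicator (fun _ => (1:ℝ)) n) / M
          ≤ (N k₀ : ℝ)/M + 1/((kM:ℝ)+1) := by
        rw [div_le_iff₀ hMpos]
        rw [add_mul, div_mul_cancel₀ _ (ne_of_gt hMpos)]
        calc (∑ n ∈ Finset.range M, (Sᶜ).indicator (fun _ => (1:ℝ)) n)
            ≤ (N k₀ : ℝ) + (M:ℝ) * (1/((kM:ℝ)+1)) := hsum
          _ = (N k₀ : ℝ) + 1/((kM:ℝ)+1) * M := by ring
      linarith
    rw [hasDensityOne]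
    have hcongr : ∀ᶠ M : ℕ in atTop,
        1 - (∑ n ∈ Finset.range M, (Sᶜ).indicator (fun _ => (1:ℝ)) n) / M
        = (∑ n ∈ Finset.range M, S.indicator (fun _ => (1:ℝ)) n) / M := by
      filter_upwards [eventually_ge_atTop 1] with M hM
      have hMpos : (0:ℝ) < M := by exact_mod_cast hM
      have hptS : ∀ n : ℕ, S.indicator (fun _ => (1:ℝ)) n
          = 1 - (Sᶜ).indicator (fun _ => (1:ℝ)) n := by
        intro n
        by_cases h : n ∈ S
        · rw [Set.indicator_of_mem h, Set.indicator_of_notMem (by simp [h])]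
          norm_num
        · rw [Set.indicator_of_notMem h, Set.indicator_of_mem (Set.mem_compl h)]
          norm_num
      simp_rw [hptS]
      rw [Finset.sum_sub_distrib, Finset.sum_const, Finset.card_range, nsmul_eq_mul, mul_one,
        sub_div, div_self (ne_of_gt hMpos)]
    have h1 : Tendsto (fun M : ℕ =>
        1 - (∑ n ∈ Finset.range M, (Sᶜ).indicator (fun _ => (1:ℝ)) n) / M) atTop (𝓝 (1-0)) :=
      tendsto_const_nhds.sub hDc
    rw [sub_zero] at h1
    exact h1.congr' hcongr
  · -- convergence along S
    rw [Metric.tendsto_nhds]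
    intro ε hε
    obtain ⟨k₀, hk₀⟩ := exists_nat_one_div_lt hε
    rw [eventually_inf_principal]
    filter_upwards [eventually_ge_atTop (N k₀)] with n hn hnS
    have hN0n : N 0 ≤ n := le_trans (hNmono.monotone (Nat.zero_le k₀)) hn
    obtain ⟨h1, h2⟩ := hloc n hN0n
    set j := Nat.findGreatest (fun j => N j ≤ n) n with hj
    have hk₀j : k₀ ≤ j := Nat.le_findGreatest (le_trans hNmono.le_apply hn) hn
    have han : a n < 1 / ((j:ℝ)+1) := hnS j h1 h2
    have : (1:ℝ) / ((j:ℝ)+1) ≤ 1 / ((k₀:ℝ)+1) := by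
      apply one_div_le_one_div_of_le (by positivity)
      exact_mod_cast Nat.succ_le_succ hk₀j
    rw [Real.dist_eq, sub_zero, abs_of_nonneg (ha n)]
    linarith


set_option maxHeartbeats 2000000 in
/-- **Direct forecast error for weakly mixing systems.**
If `f` is weakly mixing (Cesàro decay of correlations), then for any finite-dimensional
hypothesis space `W` containing the constants, the direct-forecast error
`‖U^n φ - π_W U^n φ‖` converges, along a set of times of density one, to the variance
`‖φ - ∫ φ dμ‖`. -/
theorem direct_forecast_error_weak_mixing
    {Ω : Type*} [MeasurableSpace Ω] (μ : Measure Ω) [IsProbabilityMeasure μ]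
    (f : Ω → Ω) (hf : MeasurePreserving f μ μ)
    (hmix : ∀ α β : Lp ℂ 2 μ,
      Tendsto (fun N : ℕ =>
        (∑ n ∈ Finset.range N,
          ‖(∫ ω, α (f^[n] ω) * (starRingEnd ℂ) (β ω) ∂μ) -
            (∫ ω, α ω ∂μ) * (starRingEnd ℂ) (∫ ω, β ω ∂μ)‖) / (N : ℝ)) atTop (𝓝 0))
    (U : Lp ℂ 2 μ →L[ℂ] Lp ℂ 2 μ)
    (hU : ∀ ψ : Lp ℂ 2 μ, (U ψ : Ω → ℂ) =ᵐ[μ] fun ω => ψ (f ω))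
    (W : Submodule ℂ (Lp ℂ 2 μ)) [FiniteDimensional ℂ W]
    (hWconst : (MemLp.toLp (fun _ => (1 : ℂ)) (memLp_const 1)) ∈ W)
    (φ : Lp ℂ 2 μ) :
    ∃ S : Set ℕ, hasDensityOne S ∧
      Tendsto (fun n : ℕ => ‖(U ^ n) φ - (Submodule.orthogonalProjectionOnto W ((U ^ n) φ) : Lp ℂ 2 μ)‖)
        (atTop ⊓ Filter.principal S)
        (𝓝 ‖φ - MemLp.toLp (fun _ => ∫ ω, φ ω ∂μ) (memLp_const _)‖) := by
  classical
  set c : ℂ := ∫ ω, φ ω ∂μ with hc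
  set one : Lp ℂ 2 μ := MemLp.toLp (fun _ => (1 : ℂ)) (memLp_const 1) with hone
  set φ₀ : Lp ℂ 2 μ := φ - c • one with hφ₀
  -- iterates of the Koopman operator
  have hUiter : ∀ (n : ℕ) (ψ : Lp ℂ 2 μ), ((U ^ n) ψ : Ω → ℂ) =ᵐ[μ] fun ω => ψ (f^[n] ω) := by
    intro n
    induction n with
    | zero =>
      intro ψ
      simp only [pow_zero, ContinuousLinearMap.one_apply, Function.iterate_zero, id_eq]
      exact Filter.EventuallyEq.rfl
    | succ n ih =>
      intro ψ
      have h1 : (U ^ (n+1)) ψ = U ((U ^ n) ψ) := by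
        rw [pow_succ']; rfl
      calc ((U ^ (n+1)) ψ : Ω → ℂ) =ᵐ[μ] fun ω => ((U ^ n) ψ) (f ω) := by
            rw [h1]; exact hU _
        _ =ᵐ[μ] fun ω => ψ (f^[n] (f ω)) := hf.quasiMeasurePreserving.ae_eq_comp (ih ψ)
        _ = fun ω => ψ (f^[n+1] ω) := by
            funext ω; rw [Function.iterate_succ_apply]
  -- U^n is norm preserving
  have hUnorm : ∀ (n : ℕ) (ψ : Lp ℂ 2 μ), ‖(U ^ n) ψ‖ = ‖ψ‖ := by
    intro n ψ
    rw [Lp.norm_def, Lp.norm_def]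
    congr 1
    calc eLpNorm ((U ^ n) ψ) 2 μ = eLpNorm (fun ω => ψ (f^[n] ω)) 2 μ :=
          eLpNorm_congr_ae (hUiter n ψ)
      _ = eLpNorm ψ 2 μ :=
          eLpNorm_comp_measurePreserving (Lp.aestronglyMeasurable ψ) (hf.iterate n)
  -- constants are fixed
  have honeae : ∀ n : ℕ, ((U ^ n) one : Ω → ℂ) =ᵐ[μ] fun _ => (1:ℂ) := by
    intro n
    calc ((U ^ n) one : Ω → ℂ) =ᵐ[μ] fun ω => one (f^[n] ω) := hUiter n one
      _ =ᵐ[μ] fun _ => (1:ℂ) :=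
        (hf.iterate n).quasiMeasurePreserving.ae_eq_comp (MemLp.coeFn_toLp _)
  have honeLp : ∀ n : ℕ, (U ^ n) one = one := fun n =>
    Lp.ext ((honeae n).trans (MemLp.coeFn_toLp _).symm)
  -- the target norm
  have htarget : ‖φ - MemLp.toLp (fun _ => c) (memLp_const _)‖ = ‖φ₀‖ := by
    have hce : (MemLp.toLp (fun _ => c) (memLp_const c) : Lp ℂ 2 μ) = c • one := by
      apply Lp.ext
      have h1 : (one : Ω → ℂ) =ᵐ[μ] fun _ => (1:ℂ) := MemLp.coeFn_toLp _
      have h2 := Lp.coeFn_smul c one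
      calc (MemLp.toLp (fun _ => c) (memLp_const c) : Ω → ℂ) =ᵐ[μ] fun _ => c :=
            MemLp.coeFn_toLp _
        _ =ᵐ[μ] (c • one : Lp ℂ 2 μ) := by
            filter_upwards [h1, h2] with ω hω1 hω2
            rw [hω2, Pi.smul_apply, hω1, smul_eq_mul, mul_one]
    rw [hφ₀, hce]
  -- inner products with U^n φ₀
  have hinner : ∀ (n : ℕ) (β : Lp ℂ 2 μ),
      (inner ℂ β ((U ^ n) φ₀) : ℂ)
        = (∫ ω, φ (f^[n] ω) * (starRingEnd ℂ) (β ω) ∂μ)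
          - c * (starRingEnd ℂ) (∫ ω, β ω ∂μ) := by
    intro n β
    have e1 : (inner ℂ β ((U ^ n) φ₀) : ℂ)
        = inner ℂ β ((U ^ n) φ) - c * (inner ℂ β ((U ^ n) one) : ℂ) := by
      rw [hφ₀, map_sub, _root_.map_smul, inner_sub_right, inner_smul_right]
    have e2 : (inner ℂ β ((U ^ n) φ) : ℂ) = ∫ ω, φ (f^[n] ω) * (starRingEnd ℂ) (β ω) ∂μ := by
      rw [MeasureTheory.L2.inner_def]
      apply integral_congr_ae
      filter_upwards [hUiter n φ] with ω hω
      rw [RCLike.inner_apply, hω, mul_comm]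
    have e3 : (inner ℂ β ((U ^ n) one) : ℂ) = (starRingEnd ℂ) (∫ ω, β ω ∂μ) := by
      rw [MeasureTheory.L2.inner_def]
      have h4 : ∫ ω, (inner ℂ (β ω) (((U ^ n) one : Lp ℂ 2 μ) ω) : ℂ) ∂μ
          = ∫ ω, (starRingEnd ℂ) (β ω) ∂μ := by
        apply integral_congr_ae
        filter_upwards [honeae n] with ω hω
        rw [RCLike.inner_apply, hω, one_mul]
      rw [h4, integral_conj]
    rw [e1, e2, e3]
  -- the orthonormal basis of W
  set b := stdOrthonormalBasis ℂ W with hb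
  -- the squared projection norm
  set g : ℕ → ℝ := fun n => ‖(Submodule.orthogonalProjectionOnto W ((U ^ n) φ₀) : Lp ℂ 2 μ)‖^2 with hg
  have hg_eq : ∀ n, g n = ∑ j, ‖(inner ℂ ((b j : W) : Lp ℂ 2 μ) ((U ^ n) φ₀) : ℂ)‖^2 := by
    intro n
    set x := (U ^ n) φ₀ with hx
    have h1 : ‖(Submodule.orthogonalProjectionOnto W x : Lp ℂ 2 μ)‖ = ‖Submodule.orthogonalProjectionOnto W x‖ :=
      rfl
    have h2 : ‖Submodule.orthogonalProjectionOnto W x‖ = ‖b.repr (Submodule.orthogonalProjectionOnto W x)‖ :=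
      (b.repr.norm_map _).symm
    have h3 : ‖b.repr (Submodule.orthogonalProjectionOnto W x)‖
        = Real.sqrt (∑ j, ‖b.repr (Submodule.orthogonalProjectionOnto W x) j‖^2) :=
      EuclideanSpace.norm_eq _
    have h4 : ∀ j, b.repr (Submodule.orthogonalProjectionOnto W x) j
        = (inner ℂ ((b j : W) : Lp ℂ 2 μ) x : ℂ) := by
      intro j
      rw [b.repr_apply_apply]
      exact Submodule.inner_orthogonalProjectionOnto_eq_of_mem_left (K := W) (b j) x
    rw [hg]
    simp only
    rw [h1, h2, h3, Real.sq_sqrt (Finset.sum_nonneg fun j _ => sq_nonneg _)]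
    exact Finset.sum_congr rfl fun j _ => by rw [h4 j]
  -- unit norms of the basis vectors
  have hbnorm : ∀ j, ‖((b j : W) : Lp ℂ 2 μ)‖ = 1 := by
    intro j
    rw [← Submodule.coe_norm]
    exact b.orthonormal.1 j
  have hbd : ∀ (j) (n : ℕ), ‖(inner ℂ ((b j : W) : Lp ℂ 2 μ) ((U ^ n) φ₀) : ℂ)‖ ≤ ‖φ₀‖ := by
    intro j n
    calc ‖(inner ℂ ((b j : W) : Lp ℂ 2 μ) ((U ^ n) φ₀) : ℂ)‖
        ≤ ‖((b j : W) : Lp ℂ 2 μ)‖ * ‖(U ^ n) φ₀‖ := norm_inner_le_norm _ _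
      _ = ‖φ₀‖ := by rw [hbnorm, hUnorm, one_mul]
  -- Cesàro decay of the individual correlations
  have hmix' : ∀ j, Tendsto (fun N : ℕ =>
      (∑ n ∈ Finset.range N, ‖(inner ℂ ((b j : W) : Lp ℂ 2 μ) ((U ^ n) φ₀) : ℂ)‖) / N)
      atTop (𝓝 0) := by
    intro j
    have h := hmix φ ((b j : W) : Lp ℂ 2 μ)
    rw [← hc] at h
    refine h.congr fun N => ?_
    congr 1
    refine Finset.sum_congr rfl fun n _ => ?_
    rw [hinner n _]
  -- Cesàro decay of g
  have hces : Tendsto (fun N : ℕ => (∑ n ∈ Finset.range N, g n) / N) atTop (𝓝 0) := by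
    apply squeeze_zero (g := fun N : ℕ => ∑ j, ‖φ₀‖ *
        ((∑ n ∈ Finset.range N, ‖(inner ℂ ((b j : W) : Lp ℂ 2 μ) ((U ^ n) φ₀) : ℂ)‖) / N))
    · intro N
      exact div_nonneg (Finset.sum_nonneg fun n _ => sq_nonneg _) (Nat.cast_nonneg N)
    · intro N
      calc (∑ n ∈ Finset.range N, g n) / N
          ≤ (∑ n ∈ Finset.range N,
              ∑ j, ‖φ₀‖ * ‖(inner ℂ ((b j : W) : Lp ℂ 2 μ) ((U ^ n) φ₀) : ℂ)‖) / N := by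
            apply div_le_div_of_nonneg_right ?_ (Nat.cast_nonneg N)
            apply Finset.sum_le_sum
            intro n _
            rw [hg_eq n]
            apply Finset.sum_le_sum
            intro j _
            rw [sq]
            exact mul_le_mul_of_nonneg_right (hbd j n) (norm_nonneg _)
        _ = ∑ j, ‖φ₀‖ * ((∑ n ∈ Finset.range N,
              ‖(inner ℂ ((b j : W) : Lp ℂ 2 μ) ((U ^ n) φ₀) : ℂ)‖) / N) := by
            rw [Finset.sum_comm, Finset.sum_div]
            refine Finset.sum_congr rfl fun j _ => ?_
            rw [← Finset.mul_sum, mul_div_assoc]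
    · have h := tendsto_finset_sum (Finset.univ)
        (fun j _ => ((hmix' j).const_mul ‖φ₀‖ :
          Tendsto _ atTop (𝓝 (‖φ₀‖ * 0))))
      simpa using h
  obtain ⟨S, hS1, hS2⟩ := kvn (a := g) (fun n => sq_nonneg _) hces
  refine ⟨S, hS1, ?_⟩
  -- the forecast error identity
  have hkey : ∀ n : ℕ, ‖(U ^ n) φ - (Submodule.orthogonalProjectionOnto W ((U ^ n) φ) : Lp ℂ 2 μ)‖
      = Real.sqrt (‖φ₀‖^2 - g n) := by
    intro n
    have hsub : (U ^ n) φ - (Submodule.orthogonalProjectionOnto W ((U ^ n) φ) : Lp ℂ 2 μ)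
        = (U ^ n) φ₀ - (Submodule.orthogonalProjectionOnto W ((U ^ n) φ₀) : Lp ℂ 2 μ) := by
      have h1 : (U ^ n) φ = (U ^ n) φ₀ + c • one := by
        rw [hφ₀, map_sub, _root_.map_smul, honeLp n, sub_add_cancel]
      have h2 : ((Submodule.orthogonalProjectionOnto W (c • one) : W) : Lp ℂ 2 μ) = c • one := by
        rw [_root_.map_smul, Submodule.coe_smul]
        congr 1
        exact Submodule.starProjection_eq_self_iff.mpr hWconst
      rw [h1, map_add, Submodule.coe_add, h2]
      abel
    rw [hsub]
    have hpyth := Submodule.norm_sq_eq_add_norm_sq_projection ((U ^ n) φ₀) W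
    have horth : ‖(Submodule.orthogonalProjectionOnto Wᗮ ((U ^ n) φ₀) : Lp ℂ 2 μ)‖
        = ‖(U ^ n) φ₀ - (Submodule.orthogonalProjectionOnto W ((U ^ n) φ₀) : Lp ℂ 2 μ)‖ := by
      rw [Submodule.orthogonalProjectionOnto_orthogonal]
      rfl
    have hval : ‖(U ^ n) φ₀ - (Submodule.orthogonalProjectionOnto W ((U ^ n) φ₀) : Lp ℂ 2 μ)‖^2
        = ‖φ₀‖^2 - g n := by
      rw [Submodule.coe_norm, Submodule.coe_norm, horth, hUnorm n φ₀] at hpyth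
      rw [hg]
      simp only
      linarith
    rw [← Real.sqrt_sq (norm_nonneg
      ((U ^ n) φ₀ - (Submodule.orthogonalProjectionOnto W ((U ^ n) φ₀) : Lp ℂ 2 μ))), hval]
  have hlim : Tendsto (fun n : ℕ => Real.sqrt (‖φ₀‖^2 - g n)) (atTop ⊓ Filter.principal S)
      (𝓝 (Real.sqrt (‖φ₀‖^2 - 0))) :=
    (Real.continuous_sqrt.comp (continuous_const.sub continuous_id)).continuousAt.tendsto.comp hS2
  rw [sub_zero, Real.sqrt_sq (norm_nonneg _)] at hlim
  rw [show (𝓝 ‖φ - MemLp.toLp (fun _ => c) (memLp_const _)‖) = 𝓝 ‖φ₀‖ from by rw [htarget]]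
  exact Tendsto.congr (fun n => (hkey n).symm) hlim
end

section
/- Let (Ω, μ) be a probability space and f : Ω → Ω a measure-preserving transformation that is strongly mixing in the sense that for all α, β ∈ L²(μ; ℂ), ⟨α∘f^n, β⟩ → (∫α dμ)(conj ∫β dμ) as n → ∞. Let U be the Koopman operator Uψ = ψ∘f on L²(μ; ℂ), W a finite-dimensional subspace of L²(μ; ℂ) containing the constant functions, and π_W the orthogonal projection onto W. Then for every φ ∈ L²(μ; ℂ), lim_{n → ∞} ‖U^n φ − π_W U^n φ‖ = ‖φ − ∫φ dμ‖_{L²(μ)} (the limit holds along the full sequence of natural numbers). -/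
open MeasureTheory Filter Topology

/-- **Direct forecast error for strongly mixing systems.**
If `f` is strongly mixing (decay of correlations along the full sequence of times), then for
any finite-dimensional hypothesis space `W` containing the constants, the direct-forecast
error `‖U^n φ - π_W U^n φ‖` converges (along all of `ℕ`) to the variance `‖φ - ∫ φ dμ‖`. -/
theorem direct_forecast_error_strong_mixing
    {Ω : Type*} [MeasurableSpace Ω] (μ : Measure Ω) [IsProbabilityMeasure μ]
    (f : Ω → Ω) (hf : MeasurePreserving f μ μ)
    (hmix : ∀ α β : Lp ℂ 2 μ,
      Tendsto (fun n : ℕ => ∫ ω, α (f^[n] ω) * (starRingEnd ℂ) (β ω) ∂μ) atTop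
        (𝓝 ((∫ ω, α ω ∂μ) * (starRingEnd ℂ) (∫ ω, β ω ∂μ))))
    (U : Lp ℂ 2 μ →L[ℂ] Lp ℂ 2 μ)
    (hU : ∀ ψ : Lp ℂ 2 μ, (U ψ : Ω → ℂ) =ᵐ[μ] fun ω => ψ (f ω))
    (W : Submodule ℂ (Lp ℂ 2 μ)) [FiniteDimensional ℂ W]
    (hWconst : (MemLp.toLp (fun _ => (1 : ℂ)) (memLp_const 1)) ∈ W)
    (φ : Lp ℂ 2 μ) :
    Tendsto (fun n : ℕ => ‖(U ^ n) φ - (W.orthogonalProjection ((U ^ n) φ) : Lp ℂ 2 μ)‖)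
      atTop (𝓝 ‖φ - MemLp.toLp (fun _ => ∫ ω, φ ω ∂μ) (memLp_const _)‖) := by
  classical
  set c : ℂ := ∫ ω, φ ω ∂μ with hc
  set one : Lp ℂ 2 μ := MemLp.toLp (fun _ => (1 : ℂ)) (memLp_const 1) with hone
  have honeae : (one : Ω → ℂ) =ᵐ[μ] fun _ => (1 : ℂ) := by
    rw [hone]; exact MemLp.coeFn_toLp _
  -- inner ℂ product formula on L²
  have hinner : ∀ ψ χ : Lp ℂ 2 μ,
      (inner ℂ ψ χ : ℂ) = ∫ ω, (starRingEnd ℂ) (ψ ω) * χ ω ∂μ := by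
    intro ψ χ
    rw [MeasureTheory.L2.inner_def]
    simp only [RCLike.inner_apply']
  -- iterates of the Koopman operator
  have hUn : ∀ (ψ : Lp ℂ 2 μ) (n : ℕ),
      ((U ^ n) ψ : Ω → ℂ) =ᵐ[μ] fun ω => ψ (f^[n] ω) := by
    intro ψ n
    induction n generalizing ψ with
    | zero => simp
    | succ n ih =>
      have h1 : (U ^ (n + 1)) ψ = (U ^ n) (U ψ) := by
        rw [pow_succ, ContinuousLinearMap.mul_apply]
      rw [h1]
      refine (ih (U ψ)).trans ?_
      have h2 : ((U ψ : Ω → ℂ) ∘ f^[n]) =ᵐ[μ] ((fun ω => ψ (f ω)) ∘ f^[n]) :=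
        (hf.iterate n).quasiMeasurePreserving.ae_eq_comp (hU ψ)
      refine h2.mono fun ω hω => ?_
      simp only [Function.comp] at hω ⊢
      rw [hω, ← Function.iterate_succ_apply' f n ω]
  -- norm invariance
  have hnorm : ∀ n : ℕ, ‖(U ^ n) φ‖ = ‖φ‖ := by
    intro n
    have hsq : (inner ℂ ((U ^ n) φ) ((U ^ n) φ) : ℂ) = inner ℂ φ φ := by
      rw [hinner, hinner]
      have h1 : ∫ ω, (starRingEnd ℂ) (((U ^ n) φ) ω) * ((U ^ n) φ) ω ∂μ
          = ∫ ω, (starRingEnd ℂ) (φ (f^[n] ω)) * φ (f^[n] ω) ∂μ := by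
        refine integral_congr_ae ?_
        filter_upwards [hUn φ n] with ω hω
        rw [hω]
      rw [h1]
      have h2 : ∫ ω, (starRingEnd ℂ) (φ ω) * φ ω ∂(μ.map f^[n])
          = ∫ ω, (starRingEnd ℂ) (φ (f^[n] ω)) * φ (f^[n] ω) ∂μ := by
        refine integral_map (hf.iterate n).measurable.aemeasurable ?_
        rw [(hf.iterate n).map_eq]
        simp only [starRingEnd_apply]
        exact ((continuous_star.comp_aestronglyMeasurable
          (Lp.aestronglyMeasurable φ)).mul (Lp.aestronglyMeasurable φ))
      rw [← h2, (hf.iterate n).map_eq]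
    have := congrArg RCLike.re hsq
    rw [← norm_sq_eq_re_inner, ← norm_sq_eq_re_inner] at this
    have h3 : ‖(U ^ n) φ‖ = Real.sqrt (‖(U ^ n) φ‖ ^ 2) := (Real.sqrt_sq (norm_nonneg _)).symm
    rw [h3, this, Real.sqrt_sq (norm_nonneg _)]
  -- inner ℂ product against `one` is the integral
  have h1inner : ∀ χ : Lp ℂ 2 μ, (inner ℂ one χ : ℂ) = ∫ ω, χ ω ∂μ := by
    intro χ
    rw [hinner]
    refine integral_congr_ae ?_
    filter_upwards [honeae] with ω hω
    simp [hω]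
  have honenorm : ‖one‖ ^ 2 = 1 := by
    have h1 : (inner ℂ one one : ℂ) = 1 := by
      rw [h1inner]
      have : ∫ ω, (one : Ω → ℂ) ω ∂μ = ∫ _ω, (1 : ℂ) ∂μ :=
        integral_congr_ae honeae
      rw [this]
      simp
    rw [norm_sq_eq_re_inner (𝕜 := ℂ), h1]
    simp
  -- mixing in terms of inner ℂ products
  have hlim : ∀ β : Lp ℂ 2 μ,
      Tendsto (fun n : ℕ => (inner ℂ β ((U ^ n) φ) : ℂ)) atTop
        (𝓝 (c * (starRingEnd ℂ) (∫ ω, β ω ∂μ))) := by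
    intro β
    refine (hmix φ β).congr fun n => ?_
    rw [hinner]
    refine integral_congr_ae ?_
    filter_upwards [hUn φ n] with ω hω
    rw [hω, mul_comm]
  -- orthonormal basis of W
  set d := Module.finrank ℂ W with hd
  set b := stdOrthonormalBasis ℂ W with hb
  -- norm of the projection via the basis
  have hproj_sq : ∀ x : Lp ℂ 2 μ,
      ‖(W.orthogonalProjectionOnto x : Lp ℂ 2 μ)‖ ^ 2
        = ∑ i : Fin d, ‖(inner ℂ ((b i : Lp ℂ 2 μ)) x : ℂ)‖ ^ 2 := by
    intro x
    have h1 : ‖(W.orthogonalProjectionOnto x : Lp ℂ 2 μ)‖ = ‖W.orthogonalProjectionOnto x‖ := rfl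
    rw [h1, ← b.repr.norm_map (W.orthogonalProjectionOnto x), EuclideanSpace.norm_eq,
      Real.sq_sqrt (Finset.sum_nonneg fun i _ => sq_nonneg _)]
    refine Finset.sum_congr rfl fun i _ => ?_
    rw [b.repr_apply_apply, Submodule.inner_orthogonalProjectionOnto_eq_of_mem_left]
  -- Pythagoras
  have hpyth : ∀ x : Lp ℂ 2 μ,
      ‖x - (W.orthogonalProjectionOnto x : Lp ℂ 2 μ)‖ ^ 2
        = ‖x‖ ^ 2 - ‖(W.orthogonalProjectionOnto x : Lp ℂ 2 μ)‖ ^ 2 := by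
    intro x
    have h0 : (inner ℂ ((W.orthogonalProjectionOnto x : Lp ℂ 2 μ))
        (x - (W.orthogonalProjectionOnto x : Lp ℂ 2 μ)) : ℂ) = 0 := by
      rw [← inner_conj_symm, show inner ℂ (x - (W.orthogonalProjectionOnto x : Lp ℂ 2 μ)) (W.orthogonalProjectionOnto x : Lp ℂ 2 μ) = 0 from
        Submodule.starProjection_inner_eq_zero x _ (W.orthogonalProjectionOnto x).2]
      simp
    have h1 : x = (W.orthogonalProjectionOnto x : Lp ℂ 2 μ)
        + (x - (W.orthogonalProjectionOnto x : Lp ℂ 2 μ)) := by abel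
    have h2 : ‖x‖ ^ 2 = ‖(W.orthogonalProjectionOnto x : Lp ℂ 2 μ)‖ ^ 2
        + ‖x - (W.orthogonalProjectionOnto x : Lp ℂ 2 μ)‖ ^ 2 := by
      conv_lhs => rw [h1]
      rw [norm_add_sq (𝕜 := ℂ), h0]
      simp
    linarith
  -- the sum of the limits
  have hsum : ∑ i : Fin d, ‖c * (starRingEnd ℂ) (∫ ω, ((b i : Lp ℂ 2 μ)) ω ∂μ)‖ ^ 2
      = ‖c‖ ^ 2 := by
    have h1 : ∀ i : Fin d, ‖c * (starRingEnd ℂ) (∫ ω, ((b i : Lp ℂ 2 μ)) ω ∂μ)‖ ^ 2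
        = ‖c‖ ^ 2 * ‖(inner ℂ ((b i : Lp ℂ 2 μ)) one : ℂ)‖ ^ 2 := by
      intro i
      rw [← h1inner, norm_mul, mul_pow, RCLike.norm_conj, ← norm_inner_symm]
    rw [Finset.sum_congr rfl fun i _ => h1 i, ← Finset.mul_sum, ← hproj_sq one]
    have h2 : (W.orthogonalProjectionOnto one : Lp ℂ 2 μ) = one :=
      Submodule.starProjection_eq_self_iff.mpr hWconst
    rw [h2, honenorm, mul_one]
  -- convergence of the squared projection norms
  have hprojlim : Tendsto (fun n : ℕ =>
      ‖(W.orthogonalProjectionOnto ((U ^ n) φ) : Lp ℂ 2 μ)‖ ^ 2) atTop (𝓝 (‖c‖ ^ 2)) := by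
    rw [← hsum]
    have h1 : ∀ n : ℕ, ‖(W.orthogonalProjectionOnto ((U ^ n) φ) : Lp ℂ 2 μ)‖ ^ 2
        = ∑ i : Fin d, ‖(inner ℂ ((b i : Lp ℂ 2 μ)) ((U ^ n) φ) : ℂ)‖ ^ 2 :=
      fun n => hproj_sq _
    simp only [h1]
    refine tendsto_finset_sum _ fun i _ => ?_
    exact ((hlim ((b i : Lp ℂ 2 μ))).norm.pow 2)
  -- the value of the variance
  have hvar : ‖φ - MemLp.toLp (fun _ => c) (memLp_const c)‖ ^ 2 = ‖φ‖ ^ 2 - ‖c‖ ^ 2 := by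
    set C : Lp ℂ 2 μ := MemLp.toLp (fun _ => c) (memLp_const c) with hC
    have hCae : (C : Ω → ℂ) =ᵐ[μ] fun _ => c := MemLp.coeFn_toLp _
    have hφC : (inner ℂ φ C : ℂ) = c * (starRingEnd ℂ) c := by
      rw [hinner]
      have : ∫ ω, (starRingEnd ℂ) (φ ω) * C ω ∂μ = ∫ ω, (starRingEnd ℂ) (φ ω) * c ∂μ := by
        refine integral_congr_ae ?_
        filter_upwards [hCae] with ω hω
        rw [hω]
      rw [this, integral_mul_const, ← integral_conj]
      exact mul_comm _ _
    have hCφ : (inner ℂ C φ : ℂ) = (starRingEnd ℂ) c * c := by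
      rw [hinner]
      have : ∫ ω, (starRingEnd ℂ) (C ω) * φ ω ∂μ
          = ∫ ω, (starRingEnd ℂ) c * φ ω ∂μ := by
        refine integral_congr_ae ?_
        filter_upwards [hCae] with ω hω
        rw [hω]
      rw [this, integral_const_mul, ← hc]
    have hCC : (inner ℂ C C : ℂ) = (starRingEnd ℂ) c * c := by
      rw [hinner]
      have : ∫ ω, (starRingEnd ℂ) (C ω) * C ω ∂μ
          = ∫ _ω, (starRingEnd ℂ) c * c ∂μ := by
        refine integral_congr_ae ?_
        filter_upwards [hCae] with ω hω
        rw [hω]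
      rw [this]
      simp
    have hexp : (inner ℂ (φ - C) (φ - C) : ℂ) = inner ℂ φ φ - c * (starRingEnd ℂ) c := by
      rw [inner_sub_sub_self, hφC, hCφ, hCC]
      ring
    rw [norm_sq_eq_re_inner (𝕜 := ℂ), hexp]
    rw [norm_sq_eq_re_inner (𝕜 := ℂ) φ]
    have : RCLike.re (c * (starRingEnd ℂ) c) = ‖c‖ ^ 2 := by
      rw [RCLike.mul_conj, ← RCLike.ofReal_pow, RCLike.ofReal_re]
    simp only [map_sub, this]
  -- assemble
  have hsqlim : Tendsto (fun n : ℕ =>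
      ‖(U ^ n) φ - (W.orthogonalProjectionOnto ((U ^ n) φ) : Lp ℂ 2 μ)‖ ^ 2) atTop
      (𝓝 (‖φ‖ ^ 2 - ‖c‖ ^ 2)) := by
    have h1 : ∀ n : ℕ, ‖(U ^ n) φ - (W.orthogonalProjectionOnto ((U ^ n) φ) : Lp ℂ 2 μ)‖ ^ 2
        = ‖φ‖ ^ 2 - ‖(W.orthogonalProjectionOnto ((U ^ n) φ) : Lp ℂ 2 μ)‖ ^ 2 := by
      intro n
      rw [hpyth, hnorm]
    simp only [h1]
    exact (tendsto_const_nhds.sub hprojlim)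
  have hfinal := hsqlim.sqrt
  rw [show ‖φ‖ ^ 2 - ‖c‖ ^ 2 = ‖φ - MemLp.toLp (fun _ => c) (memLp_const c)‖ ^ 2 from hvar.symm,
    Real.sqrt_sq (norm_nonneg _)] at hfinal
  refine hfinal.congr fun n => ?_
  rw [Real.sqrt_sq (norm_nonneg _)]
end

section
/- Let a : ℕ → ℝ be a bounded sequence with a_n ≥ 0 for all n. Then the following are equivalent: (1) lim_{N→∞} (1/N) ∑_{n=0}^{N−1} a_n = 0; (2) there exists a set S ⊆ ℕ of natural density 1 such that a_n → 0 along S, i.e. for every ε > 0 the set {n ∈ S : a_n ≥ ε} is finite. -/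
open Filter Topology

lemma ind_sum_eq_card (S : Set ℕ) (M : ℕ) [DecidablePred (· ∈ S)] :
    (∑ n ∈ Finset.range M, S.indicator (fun _ => (1 : ℝ)) n)
      = ((Finset.range M).filter (fun n => n ∈ S)).card := by
  simp [Set.indicator_apply, Finset.sum_ite, Finset.sum_const]

lemma card_split (S : Set ℕ) (M : ℕ) [DecidablePred (· ∈ S)] :
    ((Finset.range M).filter (fun n => n ∈ S)).card
      + ((Finset.range M).filter (fun n => n ∉ S)).card = M := by
  simpa using Finset.card_filter_add_card_filter_not (s := Finset.range M)
    (p := fun n => n ∈ S)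

lemma geom_bd (k M : ℕ) : ∑ j ∈ Finset.range M, ((1:ℝ)/2)^(k+1+j) ≤ (1/2)^k := by
  simp_rw [pow_add]
  rw [← Finset.mul_sum]
  have h : ∑ j ∈ Finset.range M, ((1:ℝ)/2)^j ≤ 2 := by
    have := geom_sum_eq (show (1:ℝ)/2 ≠ 1 by norm_num) M
    rw [this]
    have h2 : (0:ℝ) ≤ ((1:ℝ)/2)^M := by positivity
    rw [div_le_iff_of_neg (by norm_num)]
    linarith
  calc ((1:ℝ)/2)^k * ((1:ℝ)/2)^1 * ∑ j ∈ Finset.range M, ((1:ℝ)/2)^j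
      ≤ (1/2)^k * (1/2)^1 * 2 := by
        apply mul_le_mul_of_nonneg_left h (by positivity)
    _ = (1/2)^k := by ring


private lemma kvn_fwd (a : ℕ → ℝ) (hpos : ∀ n, 0 ≤ a n)
    (hA : Tendsto (fun N : ℕ => (∑ n ∈ Finset.range N, a n) / (N : ℝ)) atTop (𝓝 0)) :
    ∃ S : Set ℕ, hasDensityOne S ∧ ∀ ε : ℝ, 0 < ε → {n : ℕ | n ∈ S ∧ ε ≤ a n}.Finite := by
  classical
  -- Markov inequality: density of big times is 0
  have markov : ∀ δ : ℝ, 0 < δ → Tendsto (fun M : ℕ =>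
      (((Finset.range M).filter (fun n => δ ≤ a n)).card : ℝ) / M) atTop (𝓝 0) := by
    intro δ hδ
    have hg : Tendsto (fun M : ℕ => δ⁻¹ * ((∑ n ∈ Finset.range M, a n) / M)) atTop (𝓝 0) := by
      simpa using hA.const_mul δ⁻¹
    apply squeeze_zero (fun M => by positivity) _ hg
    intro M
    rcases Nat.eq_zero_or_pos M with rfl | hM
    · simp
    have hnum : δ * ((Finset.range M).filter (fun n => δ ≤ a n)).card
        ≤ ∑ n ∈ Finset.range M, a n := by
      calc δ * ((Finset.range M).filter (fun n => δ ≤ a n)).card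
          = ∑ n ∈ (Finset.range M).filter (fun n => δ ≤ a n), δ := by
            rw [Finset.sum_const]; ring
        _ ≤ ∑ n ∈ (Finset.range M).filter (fun n => δ ≤ a n), a n :=
            Finset.sum_le_sum (fun n hn => (Finset.mem_filter.1 hn).2)
        _ ≤ ∑ n ∈ Finset.range M, a n :=
            Finset.sum_le_sum_of_subset_of_nonneg (Finset.filter_subset _ _)
              (fun n _ _ => hpos n)
    rw [← mul_div_assoc]
    have hMpos : (0:ℝ) < M := by exact_mod_cast hM
    apply div_le_div_of_nonneg_right ((le_inv_mul_iff₀ hδ).2 hnum) hMpos.le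
  -- choose thresholds
  have hN0 : ∀ k : ℕ, ∃ N0 : ℕ, ∀ M : ℕ, N0 ≤ M →
      (((Finset.range M).filter (fun n => 1/((k:ℝ)+1) ≤ a n)).card : ℝ) ≤ M * (1/2)^(k+1) := by
    intro k
    have h := markov (1/((k:ℝ)+1)) (by positivity)
    rw [Metric.tendsto_atTop] at h
    obtain ⟨N0, hN0⟩ := h ((1/2)^(k+1)) (by positivity)
    refine ⟨N0 + 1, fun M hM => ?_⟩
    have hM0 : (0:ℝ) < M := by
      have : 1 ≤ M := le_trans (Nat.le_add_left _ _) hM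
      exact_mod_cast this
    have h2 := hN0 M (le_trans (Nat.le_succ _) hM)
    rw [Real.dist_eq, sub_zero, abs_of_nonneg (by positivity)] at h2
    rw [div_lt_iff₀ hM0] at h2
    nlinarith
  choose N0 hN0' using hN0
  set N : ℕ → ℕ := fun k => k + ∑ j ∈ Finset.range (k+1), N0 j with hNdef
  have hNk : ∀ k, k ≤ N k := fun k => Nat.le_add_right _ _
  have hN0le : ∀ k, N0 k ≤ N k :=
    fun k => le_trans (Finset.single_le_sum (f := N0) (fun j _ => Nat.zero_le _)
      (Finset.self_mem_range_succ k)) (Nat.le_add_left _ _)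
  set S : Set ℕ := {n | ∀ k : ℕ, N k ≤ n → a n < 1/((k:ℝ)+1)} with hSdef
  refine ⟨S, ?_, ?_⟩
  · -- density one
    have hc : Tendsto (fun M : ℕ =>
        (((Finset.range M).filter (fun n => n ∉ S)).card : ℝ) / M) atTop (𝓝 0) := by
      rw [Metric.tendsto_atTop]
      intro ε hε
      obtain ⟨k0, hk0⟩ : ∃ k0 : ℕ, ((1:ℝ)/2)^k0 < ε :=
        exists_pow_lt_of_lt_one hε (by norm_num)
      refine ⟨N k0 + 1, fun M hM => ?_⟩
      have hM1 : 1 ≤ M := le_trans (Nat.le_add_left _ _) hM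
      have hM0 : (0:ℝ) < M := by exact_mod_cast hM1
      have hNk0M : N0 k0 ≤ M := le_trans (hN0le k0) (le_trans (Nat.le_succ _) hM)
      -- combinatorial covering
      have hsub : (Finset.range M).filter (fun n => n ∉ S) ⊆
          ((Finset.range M).filter (fun n => 1/((k0:ℝ)+1) ≤ a n)) ∪
          (Finset.Ioo k0 M).biUnion (fun k =>
            (Finset.range M).filter (fun n => N k ≤ n ∧ 1/((k:ℝ)+1) ≤ a n)) := by
        intro n hn
        simp only [Finset.mem_filter, Finset.mem_range] at hn
        obtain ⟨hnM, hnS⟩ := hn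
        simp only [hSdef, Set.mem_setOf_eq, not_forall, not_lt] at hnS
        obtain ⟨k, hk1, hk2⟩ := hnS
        rcases le_or_gt k k0 with h | h
        · apply Finset.mem_union_left
          simp only [Finset.mem_filter, Finset.mem_range]
          refine ⟨hnM, le_trans ?_ hk2⟩
          apply one_div_le_one_div_of_le (by positivity)
          have : (k:ℝ) ≤ k0 := by exact_mod_cast h
          linarith
        · apply Finset.mem_union_right
          refine Finset.mem_biUnion.2 ⟨k, ?_, ?_⟩
          · exact Finset.mem_Ioo.2 ⟨h, lt_of_le_of_lt (le_trans (hNk k) hk1) hnM⟩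
          · simp only [Finset.mem_filter, Finset.mem_range]
            exact ⟨hnM, hk1, hk2⟩
      have hcard : (((Finset.range M).filter (fun n => n ∉ S)).card : ℝ)
          ≤ (((Finset.range M).filter (fun n => 1/((k0:ℝ)+1) ≤ a n)).card : ℝ)
            + ∑ k ∈ Finset.Ioo k0 M,
              (((Finset.range M).filter (fun n => N k ≤ n ∧ 1/((k:ℝ)+1) ≤ a n)).card : ℝ) := by
        have h1 := Finset.card_le_card hsub
        have h2 := Finset.card_union_le
          ((Finset.range M).filter (fun n => 1/((k0:ℝ)+1) ≤ a n))
          ((Finset.Ioo k0 M).biUnion (fun k =>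
            (Finset.range M).filter (fun n => N k ≤ n ∧ 1/((k:ℝ)+1) ≤ a n)))
        have h3 := Finset.card_biUnion_le (s := Finset.Ioo k0 M)
          (t := fun k => (Finset.range M).filter (fun n => N k ≤ n ∧ 1/((k:ℝ)+1) ≤ a n))
        have := le_trans h1 (le_trans h2 (Nat.add_le_add_left h3 _))
        exact_mod_cast this
      have hE : (((Finset.range M).filter (fun n => 1/((k0:ℝ)+1) ≤ a n)).card : ℝ)
          ≤ M * (1/2)^(k0+1) := hN0' k0 M hNk0M
      have hFk : ∀ k ∈ Finset.Ioo k0 M,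
          (((Finset.range M).filter (fun n => N k ≤ n ∧ 1/((k:ℝ)+1) ≤ a n)).card : ℝ)
            ≤ M * (1/2)^(k+1) := by
        intro k _
        rcases le_or_gt (N k) M with h | h
        · refine le_trans ?_ (hN0' k M (le_trans (hN0le k) h))
          have hss : (Finset.range M).filter (fun n => N k ≤ n ∧ 1/((k:ℝ)+1) ≤ a n)
              ⊆ (Finset.range M).filter (fun n => 1/((k:ℝ)+1) ≤ a n) := by
            intro n hn
            simp only [Finset.mem_filter] at hn ⊢
            exact ⟨hn.1, hn.2.2⟩
          exact_mod_cast Finset.card_le_card hss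
        · have hemp : (Finset.range M).filter (fun n => N k ≤ n ∧ 1/((k:ℝ)+1) ≤ a n) = ∅ := by
            apply Finset.filter_false_of_mem
            intro n hn
            rw [Finset.mem_range] at hn
            intro hcon
            exact absurd hcon.1 (by omega)
          rw [hemp, Finset.card_empty]
          simp only [Nat.cast_zero]
          positivity
      have hsum : ∑ k ∈ Finset.Ioo k0 M,
          (((Finset.range M).filter (fun n => N k ≤ n ∧ 1/((k:ℝ)+1) ≤ a n)).card : ℝ)
            ≤ M * (1/2)^(k0+1) := by
        calc ∑ k ∈ Finset.Ioo k0 M, (((Finset.range M).filter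
              (fun n => N k ≤ n ∧ 1/((k:ℝ)+1) ≤ a n)).card : ℝ)
            ≤ ∑ k ∈ Finset.Ioo k0 M, (M:ℝ) * (1/2)^(k+1) := Finset.sum_le_sum hFk
          _ = (M:ℝ) * ∑ k ∈ Finset.Ioo k0 M, ((1:ℝ)/2)^(k+1) := by rw [Finset.mul_sum]
          _ ≤ (M:ℝ) * (1/2)^(k0+1) := by
              apply mul_le_mul_of_nonneg_left _ (le_of_lt hM0)
              rw [← Finset.Ico_add_one_left_eq_Ioo, Finset.sum_Ico_eq_sum_range]
              have heq : ∀ j, ((1:ℝ)/2)^(k0+1+j+1) = ((1:ℝ)/2)^((k0+1)+1+j) := by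
                intro j; congr 1; omega
              simp_rw [heq]
              exact geom_bd (k0+1) _
      rw [Real.dist_eq, sub_zero, abs_of_nonneg (by positivity), div_lt_iff₀ hM0]
      have : (((Finset.range M).filter (fun n => n ∉ S)).card : ℝ) ≤ M * (1/2)^k0 := by
        have : (M:ℝ) * (1/2)^(k0+1) + M * (1/2)^(k0+1) = M * (1/2)^k0 := by ring
        linarith
      nlinarith
    -- turn into density one
    unfold hasDensityOne
    have h1 : Tendsto (fun M : ℕ =>
        1 - (((Finset.range M).filter (fun n => n ∉ S)).card : ℝ) / M) atTop (𝓝 1) := by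
      simpa using (tendsto_const_nhds (x := (1:ℝ)) (f := atTop)).sub hc
    apply h1.congr'
    filter_upwards [eventually_ge_atTop 1] with M hM
    have hM0 : (M:ℝ) ≠ 0 := by
      have : (0:ℝ) < M := by exact_mod_cast hM
      linarith
    rw [ind_sum_eq_card S M]
    have hsplit := card_split S M
    field_simp
    have : (((Finset.range M).filter (fun n => n ∈ S)).card : ℝ)
        + ((Finset.range M).filter (fun n => n ∉ S)).card = M := by exact_mod_cast hsplit
    linarith
  · -- finiteness
    intro ε hε
    obtain ⟨k, hk⟩ := exists_nat_one_div_lt hε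
    apply Set.Finite.subset (Set.finite_Iio (N k))
    rintro n ⟨hnS, hna⟩
    simp only [Set.mem_Iio]
    by_contra h
    push_neg at h
    have h1 := hnS k h
    have h2 : a n < ε := by
      refine lt_of_lt_of_le h1 (le_of_lt (by exact_mod_cast hk))
    linarith

private lemma kvn_bwd (a : ℕ → ℝ) (B : ℝ) (hB : ∀ n, a n ≤ B) (hB0 : 0 ≤ B) (hpos : ∀ n, 0 ≤ a n)
    (S : Set ℕ) (hS : hasDensityOne S)
    (hfin : ∀ ε : ℝ, 0 < ε → {n : ℕ | n ∈ S ∧ ε ≤ a n}.Finite) :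
    Tendsto (fun N : ℕ => (∑ n ∈ Finset.range N, a n) / (N : ℝ)) atTop (𝓝 0) := by
  classical
  rw [Metric.tendsto_atTop]
  intro ε hε
  set F := (hfin (ε/4) (by positivity)).toFinset with hF
  have h1 : Tendsto (fun M : ℕ => B * (F.card : ℝ) / M) atTop (𝓝 0) :=
    tendsto_const_nhds.div_atTop tendsto_natCast_atTop_atTop
  have h2 : Tendsto (fun M : ℕ => B * (1 -
      (∑ n ∈ Finset.range M, S.indicator (fun _ => (1:ℝ)) n) / M)) atTop (𝓝 0) := by
    simpa using ((tendsto_const_nhds (x := (1:ℝ)) (f := atTop)).sub hS).const_mul B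
  rw [Metric.tendsto_atTop] at h1 h2
  obtain ⟨N1, hN1⟩ := h1 (ε/4) (by positivity)
  obtain ⟨N2, hN2⟩ := h2 (ε/4) (by positivity)
  refine ⟨max (max N1 N2) 1, fun M hM => ?_⟩
  have hM1 : 1 ≤ M := le_trans (le_max_right _ _) hM
  have hM0 : (0:ℝ) < M := by exact_mod_cast hM1
  -- pointwise bound
  have hpt : ∀ n : ℕ, a n ≤ B * (if n ∈ F then (1:ℝ) else 0) + ε/4
      + B * (1 - S.indicator (fun _ => (1:ℝ)) n) := by
    intro n
    have hind0 : (0:ℝ) ≤ 1 - S.indicator (fun _ => (1:ℝ)) n := by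
      rcases Set.indicator_eq_zero_or_self S (fun _ => (1:ℝ)) n with h | h <;> rw [h] <;> norm_num
    by_cases hnF : n ∈ F
    · rw [if_pos hnF]
      nlinarith [hB n]
    · by_cases hnS : n ∈ S
      · rw [if_neg hnF, Set.indicator_of_mem hnS]
        have : ¬ (n ∈ S ∧ ε/4 ≤ a n) := by
          intro hcon
          exact hnF (by rw [hF]; exact (hfin (ε/4) (by positivity)).mem_toFinset.2 hcon)
        have : a n < ε/4 := by
          by_contra hcc
          push_neg at hcc
          exact this ⟨hnS, hcc⟩
        linarith
      · rw [if_neg hnF, Set.indicator_of_notMem hnS]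
        have : (0:ℝ) ≤ B * (if n ∈ F then (1:ℝ) else 0) := by positivity
        nlinarith [hB n]
  -- summed bound
  have hsum : (∑ n ∈ Finset.range M, a n) ≤ B * F.card + (ε/4) * M
      + B * (M - ∑ n ∈ Finset.range M, S.indicator (fun _ => (1:ℝ)) n) := by
    calc (∑ n ∈ Finset.range M, a n)
        ≤ ∑ n ∈ Finset.range M, (B * (if n ∈ F then (1:ℝ) else 0) + ε/4
            + B * (1 - S.indicator (fun _ => (1:ℝ)) n)) :=
          Finset.sum_le_sum (fun n _ => hpt n)
      _ = B * ∑ n ∈ Finset.range M, (if n ∈ F then (1:ℝ) else 0) + (ε/4) * M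
            + B * ((M:ℝ) - ∑ n ∈ Finset.range M, S.indicator (fun _ => (1:ℝ)) n) := by
          rw [Finset.sum_add_distrib, Finset.sum_add_distrib, ← Finset.mul_sum, ← Finset.mul_sum,
            Finset.sum_sub_distrib, Finset.sum_const, Finset.card_range, Finset.sum_const,
            Finset.card_range]
          push_cast
          ring
      _ ≤ _ := by
          have hle : ∑ n ∈ Finset.range M, (if n ∈ F then (1:ℝ) else 0) ≤ (F.card : ℝ) := by
            rw [Finset.sum_boole]
            exact_mod_cast Finset.card_le_card
              (fun n hn => (Finset.mem_filter.1 hn).2)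
          have := mul_le_mul_of_nonneg_left hle hB0
          linarith
  have hA0 : 0 ≤ (∑ n ∈ Finset.range M, a n)/(M:ℝ) :=
    div_nonneg (Finset.sum_nonneg fun n _ => hpos n) hM0.le
  rw [Real.dist_eq, sub_zero, abs_of_nonneg hA0]
  have hdiv : (∑ n ∈ Finset.range M, a n)/(M:ℝ) ≤ B*(F.card:ℝ)/M + ε/4
      + B * (1 - (∑ n ∈ Finset.range M, S.indicator (fun _ => (1:ℝ)) n) / M) := by
    calc (∑ n ∈ Finset.range M, a n)/(M:ℝ)
        ≤ (B * F.card + (ε/4) * M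
            + B * ((M:ℝ) - ∑ n ∈ Finset.range M, S.indicator (fun _ => (1:ℝ)) n))/(M:ℝ) :=
          div_le_div_of_nonneg_right hsum hM0.le
      _ = B*(F.card:ℝ)/M + ε/4
            + B * (1 - (∑ n ∈ Finset.range M, S.indicator (fun _ => (1:ℝ)) n) / M) := by
          field_simp
  have t1 := hN1 M (le_trans (le_trans (le_max_left N1 N2) (le_max_left _ 1)) hM)
  have t2 := hN2 M (le_trans (le_trans (le_max_right N1 N2) (le_max_left _ 1)) hM)
  rw [Real.dist_eq, sub_zero] at t1 t2
  have a1 := le_abs_self (B*(F.card:ℝ)/M)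
  have a2 := le_abs_self (B * (1 - (∑ n ∈ Finset.range M, S.indicator (fun _ => (1:ℝ)) n) / M))
  linarith

/-- **Koopman–von Neumann lemma.**
For a bounded nonnegative sequence `a`, Cesàro convergence to `0` is equivalent to
convergence to `0` along a set of times of natural density one (in the sense that, for
every `ε > 0`, only finitely many times in the set have `a n ≥ ε`). -/
theorem koopman_von_neumann (a : ℕ → ℝ) (hbd : ∃ B : ℝ, ∀ n, a n ≤ B)
    (hpos : ∀ n, 0 ≤ a n) :
    Tendsto (fun N : ℕ => (∑ n ∈ Finset.range N, a n) / (N : ℝ)) atTop (𝓝 0) ↔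
      ∃ S : Set ℕ, hasDensityOne S ∧
        ∀ ε : ℝ, 0 < ε → {n : ℕ | n ∈ S ∧ ε ≤ a n}.Finite := by
  obtain ⟨B, hB⟩ := hbd
  have hB0 : 0 ≤ B := le_trans (hpos 0) (hB 0)
  constructor
  · exact kvn_fwd a hpos
  · rintro ⟨S, hS, hfin⟩
    exact kvn_bwd a B hB hB0 hpos S hS hfin
end

section
/- Let M be a metric space, f : M → M a continuous map, and 𝒰 ⊆ M an open set whose closure K := cl(𝒰) is compact and nonempty, such that f(K) ⊆ 𝒰. Define X := ⋂_{n ≥ 0} f^n(K). Then X is a nonempty compact set with f(X) = X and X ⊆ 𝒰, and X attracts K: for every open set V with X ⊆ V there exists N ∈ ℕ such that f^n(K) ⊆ V for all n ≥ N. -/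
open Filter Topology

/-- **The attractor as a nested intersection of forward images.**
If the closure `K` of an open set `𝒰` is compact and nonempty and `f(K) ⊆ 𝒰`, then
`X = ⋂_{n ≥ 0} f^n(K)` is a nonempty compact set with `f(X) = X` and `X ⊆ 𝒰`, and `X`
attracts `K`: every open neighborhood `V` of `X` contains `f^n(K)` for all large `n`. -/
theorem attractor_of_nested_images
    {M : Type*} [MetricSpace M] (f : M → M) (hf : Continuous f)
    (𝒰 : Set M) (h𝒰 : IsOpen 𝒰)
    (hK : IsCompact (closure 𝒰)) (hKne : (closure 𝒰).Nonempty)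
    (hfK : f '' closure 𝒰 ⊆ 𝒰) :
    (⋂ n : ℕ, f^[n] '' closure 𝒰).Nonempty ∧
    IsCompact (⋂ n : ℕ, f^[n] '' closure 𝒰) ∧
    f '' (⋂ n : ℕ, f^[n] '' closure 𝒰) = ⋂ n : ℕ, f^[n] '' closure 𝒰 ∧
    (⋂ n : ℕ, f^[n] '' closure 𝒰) ⊆ 𝒰 ∧
    ∀ V : Set M, IsOpen V → (⋂ n : ℕ, f^[n] '' closure 𝒰) ⊆ V →
      ∃ N : ℕ, ∀ n ≥ N, f^[n] '' closure 𝒰 ⊆ V := by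
  set K := closure 𝒰 with hKdef
  have hfKK : f '' K ⊆ K := hfK.trans subset_closure
  have hsucc : ∀ n, f^[n+1] '' K = f '' (f^[n] '' K) := by
    intro n
    rw [Function.iterate_succ', Set.image_comp]
  have hmono : ∀ n, f^[n+1] '' K ⊆ f^[n] '' K := by
    intro n
    rw [Function.iterate_succ, Set.image_comp]
    exact Set.image_mono hfKK
  have hanti : Antitone (fun n => f^[n] '' K) := antitone_nat_of_succ_le hmono
  have hcomp : ∀ n, IsCompact (f^[n] '' K) := fun n => hK.image (hf.iterate n)
  have hne : ∀ n, (f^[n] '' K).Nonempty := fun n => hKne.image _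
  have hclosed : ∀ n, IsClosed (f^[n] '' K) := fun n => (hcomp n).isClosed
  have hdir : Directed (· ⊇ ·) (fun n => f^[n] '' K) :=
    hanti.directed_ge
  have hXne : (⋂ n : ℕ, f^[n] '' K).Nonempty :=
    IsCompact.nonempty_iInter_of_directed_nonempty_isCompact_isClosed _ hdir hne hcomp hclosed
  have hXcomp : IsCompact (⋂ n : ℕ, f^[n] '' K) :=
    (hcomp 0).of_isClosed_subset (isClosed_iInter hclosed) (Set.iInter_subset _ 0)
  have hXsub : (⋂ n : ℕ, f^[n] '' K) ⊆ 𝒰 := by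
    refine (Set.iInter_subset _ 1).trans ?_
    rw [hsucc 0]
    exact (Set.image_mono (by simp)).trans hfK
  refine ⟨hXne, hXcomp, ?_, hXsub, ?_⟩
  · apply Set.Subset.antisymm
    · intro x hx
      obtain ⟨y, hy, rfl⟩ := hx
      refine Set.mem_iInter.2 fun n => ?_
      rcases n with _ | n
      · have hyK : y ∈ K := by simpa using Set.mem_iInter.1 hy 0
        simpa using hfKK ⟨y, hyK, rfl⟩
      · rw [hsucc n]
        exact ⟨y, Set.mem_iInter.1 hy n, rfl⟩
    · intro x hx
      have hCne : ∀ n, ((f^[n] '' K) ∩ f ⁻¹' {x}).Nonempty := by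
        intro n
        have := Set.mem_iInter.1 hx (n+1)
        rw [hsucc n] at this
        obtain ⟨y, hy, hyx⟩ := this
        exact ⟨y, hy, hyx⟩
      have hCcomp : ∀ n, IsCompact ((f^[n] '' K) ∩ f ⁻¹' {x}) := fun n =>
        (hcomp n).inter_right (isClosed_singleton.preimage hf)
      have hCanti : Antitone (fun n => (f^[n] '' K) ∩ f ⁻¹' {x}) :=
        fun m n h => Set.inter_subset_inter_left _ (hanti h)
      have := IsCompact.nonempty_iInter_of_directed_nonempty_isCompact_isClosed
        (fun n => (f^[n] '' K) ∩ f ⁻¹' {x}) hCanti.directed_ge hCne hCcomp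
        (fun n => (hCcomp n).isClosed)
      obtain ⟨y, hy⟩ := this
      have hyX : y ∈ ⋂ n : ℕ, f^[n] '' K :=
        Set.mem_iInter.2 fun n => (Set.mem_iInter.1 hy n).1
      exact ⟨y, hyX, (Set.mem_iInter.1 hy 0).2⟩
  · intro V hV hXV
    by_contra h
    have hAne : ∀ n, ((f^[n] '' K) \ V).Nonempty := by
      intro n
      rcases Set.eq_empty_or_nonempty ((f^[n] '' K) \ V) with he | hne'
      · exfalso
        apply h
        refine ⟨n, fun m hm => ?_⟩
        have : f^[m] '' K ⊆ f^[n] '' K := hanti hm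
        intro z hz
        by_contra hzV
        exact Set.eq_empty_iff_forall_notMem.1 he z ⟨this hz, hzV⟩
      · exact hne'
    have hAcomp : ∀ n, IsCompact ((f^[n] '' K) \ V) := fun n =>
      (hcomp n).diff hV
    have hAanti : Antitone (fun n => (f^[n] '' K) \ V) :=
      fun m n hmn => Set.diff_subset_diff_left (hanti hmn)
    obtain ⟨y, hy⟩ := IsCompact.nonempty_iInter_of_directed_nonempty_isCompact_isClosed
      (fun n => (f^[n] '' K) \ V) hAanti.directed_ge hAne hAcomp
      (fun n => (hAcomp n).isClosed)
    have hyX : y ∈ ⋂ n : ℕ, f^[n] '' K :=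
      Set.mem_iInter.2 fun n => (Set.mem_iInter.1 hy n).1
    exact (Set.mem_iInter.1 hy 0).2 (hXV hyX)
end
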